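/- arXiv:hep-th/9406036 — 11 statements merged into one kernel-verified Lean document; each statement's English description precedes it below -/
import Mathlib

section
/- Let (V, ω) be a finite-dimensional real symplectic vector space and let Z ⊆ V be a symplectic subspace. Equip V × V with the bilinear form Ω((v₁,v₂),(w₁,w₂)) = ω(v₁,w₁) − ω(v₂,w₂), and let Δ_Z = {(z,z) : z ∈ Z} be the diagonal copy of Z. Then the Ω-orthogonal complement of Δ_Z in V × V equals {(v,w) ∈ V × V : v − w ∈ Z^⊥}, and this space is the internal direct sum Δ_Z ⊕ (Z^⊥ × Z^⊥); in particular the quotient (Δ_Z)^⊥ / Δ_Z is linearly isomorphic to Z^⊥ × Z^⊥. -/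
/-- Auxiliary: a product submodule is equivalent to the product of the submodules. -/
def subProdEquiv {R M N : Type*} [CommRing R] [AddCommGroup M] [AddCommGroup N]
    [Module R M] [Module R N] (p : Submodule R M) (q : Submodule R N) :
    ↥(p.prod q) ≃ₗ[R] ↥p × ↥q where
  toFun x := (⟨x.1.1, x.2.1⟩, ⟨x.1.2, x.2.2⟩)
  invFun x := ⟨(x.1.1, x.2.1), ⟨x.1.2, x.2.2⟩⟩
  map_add' x y := rfl
  map_smul' c x := rfl
  left_inv x := rfl
  right_inv x := rfl

/-- Let `(V, ω)` be a finite-dimensional real symplectic vector space and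
`Z ⊆ V` a symplectic subspace (`Z ∩ Z^⊥ = 0`).  Equip `V × V` with the form
`Ω((v₁,v₂),(w₁,w₂)) = ω(v₁,w₁) − ω(v₂,w₂)` and let `Δ_Z` be the diagonal copy of `Z`.
Then `(Δ_Z)^⊥ = {(v,w) : v − w ∈ Z^⊥}`, this space is the internal direct sum
`Δ_Z ⊕ (Z^⊥ × Z^⊥)`, and the quotient `(Δ_Z)^⊥ / Δ_Z` is linearly isomorphic to
`Z^⊥ × Z^⊥`. -/
theorem stmt0 (V : Type*) [AddCommGroup V] [Module ℝ V] [FiniteDimensional ℝ V]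
    (ω : LinearMap.BilinForm ℝ V) (halt : ∀ v, ω v v = 0)
    (hnd : ω.Nondegenerate)
    (Z : Submodule ℝ V) (hZ : Z ⊓ ω.orthogonal Z = ⊥)
    (Ω : LinearMap.BilinForm ℝ (V × V))
    (hΩ : ∀ p q : V × V, Ω p q = ω p.1 q.1 - ω p.2 q.2)
    (ΔZ : Submodule ℝ (V × V))
    (hΔ : ΔZ = Z.map ((LinearMap.id : V →ₗ[ℝ] V).prod LinearMap.id)) :
    Ω.orthogonal ΔZ
        = (ω.orthogonal Z).comap (LinearMap.fst ℝ V V - LinearMap.snd ℝ V V) ∧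
    Ω.orthogonal ΔZ = ΔZ ⊔ (ω.orthogonal Z).prod (ω.orthogonal Z) ∧
    ΔZ ⊓ (ω.orthogonal Z).prod (ω.orthogonal Z) = ⊥ ∧
    Nonempty ((↥(Ω.orthogonal ΔZ) ⧸ ΔZ.comap (Ω.orthogonal ΔZ).subtype) ≃ₗ[ℝ]
      (↥(ω.orthogonal Z) × ↥(ω.orthogonal Z))) := by
  have hrefl : ω.IsRefl := LinearMap.IsAlt.isRefl halt
  -- membership in ΔZ
  have hmemΔ : ∀ p : V × V, p ∈ ΔZ ↔ ∃ z ∈ Z, p = (z, z) := by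
    intro p
    subst hΔ
    simp only [Submodule.mem_map, LinearMap.prod_apply, LinearMap.id_coe, id_eq, Pi.prod]
    constructor
    · rintro ⟨z, hz, rfl⟩; exact ⟨z, hz, rfl⟩
    · rintro ⟨z, hz, rfl⟩; exact ⟨z, hz, rfl⟩
  -- first claim
  have h1 : Ω.orthogonal ΔZ
      = (ω.orthogonal Z).comap (LinearMap.fst ℝ V V - LinearMap.snd ℝ V V) := by
    ext p
    simp only [LinearMap.BilinForm.mem_orthogonal_iff, Submodule.mem_comap,
      LinearMap.sub_apply, LinearMap.fst_apply, LinearMap.snd_apply,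
      LinearMap.BilinForm.mem_orthogonal_iff]
    constructor
    · intro h z hz
      have h0 := h (z, z) ((hmemΔ (z, z)).2 ⟨z, hz, rfl⟩)
      rw [hΩ] at h0
      rw [map_sub]
      simpa using h0
    · intro h q hq
      obtain ⟨z, hz, rfl⟩ := (hmemΔ q).1 hq
      have h0 := h z hz
      rw [map_sub] at h0
      rw [hΩ]
      simpa using h0
  -- complement: V = Z ⊕ Z^⊥
  have hcompl : IsCompl Z (ω.orthogonal Z) :=
    (LinearMap.BilinForm.isCompl_orthogonal_iff_disjoint hrefl).2
      (disjoint_iff.2 hZ)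
  have h2 : Ω.orthogonal ΔZ = ΔZ ⊔ (ω.orthogonal Z).prod (ω.orthogonal Z) := by
    rw [h1]
    apply le_antisymm
    · intro p hp
      simp only [Submodule.mem_comap, LinearMap.sub_apply, LinearMap.fst_apply,
        LinearMap.snd_apply] at hp
      -- decompose p.1 and p.2
      obtain ⟨z₁, hz₁, a, ha, h₁⟩ := Submodule.mem_sup.1
        (hcompl.sup_eq_top ▸ Submodule.mem_top : p.1 ∈ Z ⊔ ω.orthogonal Z)
      obtain ⟨z₂, hz₂, b, hb, h₂⟩ := Submodule.mem_sup.1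
        (hcompl.sup_eq_top ▸ Submodule.mem_top : p.2 ∈ Z ⊔ ω.orthogonal Z)
      have hzz : z₁ - z₂ ∈ Z ⊓ ω.orthogonal Z := by
        refine ⟨sub_mem hz₁ hz₂, ?_⟩
        have : z₁ - z₂ = (p.1 - p.2) - (a - b) := by
          rw [← h₁, ← h₂]; abel
        rw [this]
        exact sub_mem hp (sub_mem ha hb)
      rw [hZ, Submodule.mem_bot, sub_eq_zero] at hzz
      subst hzz
      refine Submodule.mem_sup.2 ⟨(z₁, z₁), (hmemΔ _).2 ⟨z₁, hz₁, rfl⟩, (a, b), ⟨ha, hb⟩, ?_⟩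
      ext <;> simp [h₁, h₂]
    · rw [sup_le_iff]
      constructor
      · intro p hp
        obtain ⟨z, hz, rfl⟩ := (hmemΔ p).1 hp
        simp only [Submodule.mem_comap, LinearMap.sub_apply, LinearMap.fst_apply,
          LinearMap.snd_apply, sub_self]
        exact Submodule.zero_mem _
      · rintro ⟨a, b⟩ ⟨ha, hb⟩
        exact sub_mem ha hb
  have h3 : ΔZ ⊓ (ω.orthogonal Z).prod (ω.orthogonal Z) = ⊥ := by
    rw [eq_bot_iff]
    rintro p ⟨hp₁, hp₂⟩
    obtain ⟨z, hz, rfl⟩ := (hmemΔ p).1 hp₁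
    have : z ∈ Z ⊓ ω.orthogonal Z := ⟨hz, hp₂.1⟩
    rw [hZ, Submodule.mem_bot] at this
    simp [this, Prod.ext_iff]
  refine ⟨h1, h2, h3, ?_⟩
  rw [h2, sup_comm]
  set P := (ω.orthogonal Z).prod (ω.orthogonal Z) with hP
  have hinf : P ⊓ ΔZ = ⊥ := by rw [inf_comm]; exact h3
  have e1 := (LinearMap.quotientInfEquivSupQuotient P ΔZ).symm
  have hbot : Submodule.comap P.subtype (P ⊓ ΔZ) = ⊥ := by
    rw [hinf, Submodule.comap_bot, Submodule.ker_subtype]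
  exact ⟨e1.trans ((Submodule.quotEquivOfEqBot _ hbot).trans (subProdEquiv _ _))⟩
end

section
/- Let (V, ω) be a finite-dimensional real symplectic vector space, let Z ⊆ V be a symplectic subspace, and let Y ⊆ V be a Lagrangian subspace such that Y ∩ Z is a Lagrangian subspace of the symplectic vector space Z. Then Y is the internal direct sum (Y ∩ Z) ⊕ (Y ∩ Z^⊥), and Y ∩ Z^⊥ is a Lagrangian subspace of the symplectic vector space Z^⊥. -/
/-- Let `(V, ω)` be a finite-dimensional real symplectic vector space,
`Z ⊆ V` a symplectic subspace (`Z ∩ Z^⊥ = 0`), and `Y ⊆ V` a Lagrangian subspace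
(`Y = Y^⊥`) such that `Y ∩ Z` is a Lagrangian subspace of `Z`
(`Y ∩ Z = {u ∈ Z : ω(u,v) = 0 for all v ∈ Y ∩ Z}`).  Then `Y` is the internal
direct sum `(Y ∩ Z) ⊕ (Y ∩ Z^⊥)`, and `Y ∩ Z^⊥` is a Lagrangian subspace of `Z^⊥`. -/
theorem stmt1 (V : Type*) [AddCommGroup V] [Module ℝ V] [FiniteDimensional ℝ V]
    (ω : LinearMap.BilinForm ℝ V) (halt : ∀ v, ω v v = 0)
    (hnd : ω.Nondegenerate)
    (Z Y : Submodule ℝ V)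
    (hZ : Z ⊓ ω.orthogonal Z = ⊥)
    (hY : Y = ω.orthogonal Y)
    (hYZ : Y ⊓ Z = Z ⊓ ω.orthogonal (Y ⊓ Z)) :
    Y = (Y ⊓ Z) ⊔ (Y ⊓ ω.orthogonal Z) ∧
    (Y ⊓ Z) ⊓ (Y ⊓ ω.orthogonal Z) = ⊥ ∧
    Y ⊓ ω.orthogonal Z = ω.orthogonal Z ⊓ ω.orthogonal (Y ⊓ ω.orthogonal Z) := by
  have hAlt : ω.IsAlt := halt
  have hre : ω.IsRefl := hAlt.isRefl
  -- Z ⊔ Z^⊥ = ⊤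
  have hcompl : IsCompl Z (ω.orthogonal Z) :=
    (LinearMap.BilinForm.isCompl_orthogonal_iff_disjoint hre).mpr
      (disjoint_iff.mpr hZ)
  have htop : Z ⊔ ω.orthogonal Z = ⊤ := hcompl.sup_eq_top
  -- Part 1
  have h1 : Y = (Y ⊓ Z) ⊔ (Y ⊓ ω.orthogonal Z) := by
    apply le_antisymm
    · intro y hy
      -- decompose y = z + w
      have : y ∈ Z ⊔ ω.orthogonal Z := by rw [htop]; trivial
      obtain ⟨z, hz, w, hw, hzw⟩ := Submodule.mem_sup.mp this
      have hzY : z ∈ Y ⊓ Z := by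
        rw [hYZ]
        refine ⟨hz, ?_⟩
        intro u hu
        have hyu : ω u y = 0 := by
          have : y ∈ ω.orthogonal Y := hY ▸ hy
          exact this u hu.1
        have hwu : ω u w = 0 := hw u hu.2
        have : ω u z = ω u y - ω u w := by
          rw [← hzw]; simp
        rw [this, hyu, hwu, sub_zero]
      have hwY : w ∈ Y ⊓ ω.orthogonal Z := by
        refine ⟨?_, hw⟩
        have : w = y - z := by rw [← hzw]; abel
        rw [this]
        exact Y.sub_mem hy hzY.1
      rw [← hzw]
      exact Submodule.add_mem_sup hzY hwY
    · exact sup_le inf_le_left inf_le_left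
  refine ⟨h1, ?_, ?_⟩
  · -- Part 2
    have h2 : (Y ⊓ Z) ⊓ (Y ⊓ ω.orthogonal Z) ≤ Z ⊓ ω.orthogonal Z :=
      inf_le_inf inf_le_right inf_le_right
    exact le_bot_iff.mp (hZ ▸ h2)
  · -- Part 3
    apply le_antisymm
    · intro w hw
      refine ⟨hw.2, ?_⟩
      intro u hu
      have : w ∈ ω.orthogonal Y := hY ▸ hw.1
      exact this u hu.1
    · intro u hu
      refine ⟨?_, hu.1⟩
      rw [hY]
      intro n hn
      have hn' : n ∈ (Y ⊓ Z) ⊔ (Y ⊓ ω.orthogonal Z) := h1 ▸ hn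
      obtain ⟨a, ha, b, hb, hab⟩ := Submodule.mem_sup.mp hn'
      have hau : ω a u = 0 := hu.1 a ha.2
      have hbu : ω b u = 0 := hu.2 b hb
      rw [← hab]
      simp [hau, hbu]
end

section
/- Let n be a positive integer and let A, B, D, H be real n×n matrices with A, D, H symmetric, satisfying A·D − B·B = I, Bᵗ·D = D·B, and A·Bᵗ = B·A. Assume D is invertible and that the complex matrix I + iBᵗ + iDH is invertible, and set M = (I + iBᵗ + iDH)⁻¹·D. Then the matrix G = A + BH + HBᵗ + HDH is invertible, and for all vectors q', p' ∈ ℝⁿ one has the identity of complex numbers: p'ᵗq' − q'ᵗHq' + i·(p' − Hq')ᵗ·M·(p' − Hq') = (p' − Hq')ᵗ · G⁻¹ · [ (A + HBᵗ)q' + (B + HD)p' + i(p' − Hq') ]. -/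
open Matrix

/-- the Hessian identity
`p'ᵗq' − q'ᵗHq' + i(p'−Hq')ᵗM(p'−Hq') = (p'−Hq')ᵗ G⁻¹ [(A+HBᵗ)q' + (B+HD)p' + i(p'−Hq')]`
with `M = (I+iBᵗ+iDH)⁻¹D` and `G = A + BH + HBᵗ + HDH`, under the metric/symplectic
compatibility identities `AD − BB = I`, `BᵗD = DB`, `ABᵗ = BA` (A, D, H symmetric),
`D` invertible and `I + iBᵗ + iDH` invertible; moreover `G` is invertible. -/
theorem stmt4 (n : ℕ) (hn : 0 < n) (A B D H : Matrix (Fin n) (Fin n) ℝ)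
    (hA : A.IsSymm) (hD : D.IsSymm) (hH : H.IsSymm)
    (h1 : A * D - B * B = 1) (h2 : Bᵀ * D = D * B) (h3 : A * Bᵀ = B * A)
    (hDinv : IsUnit D)
    (hinv : IsUnit ((1 : Matrix (Fin n) (Fin n) ℂ)
      + Complex.I • (B.map Complex.ofReal)ᵀ
      + Complex.I • (D.map Complex.ofReal * H.map Complex.ofReal))) :
    IsUnit (A + B * H + H * Bᵀ + H * D * H) ∧
    ∀ q' p' : Fin n → ℝ,
      let Ac := A.map Complex.ofReal
      let Bc := B.map Complex.ofReal
      let Dc := D.map Complex.ofReal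
      let Hc := H.map Complex.ofReal
      let M := ((1 : Matrix (Fin n) (Fin n) ℂ) + Complex.I • Bcᵀ + Complex.I • (Dc * Hc))⁻¹ * Dc
      let Gc := (A + B * H + H * Bᵀ + H * D * H).map Complex.ofReal
      let qc : Fin n → ℂ := fun i => (q' i : ℂ)
      let pc : Fin n → ℂ := fun i => (p' i : ℂ)
      let gc : Fin n → ℂ := pc - Hc *ᵥ qc
      pc ⬝ᵥ qc - qc ⬝ᵥ (Hc *ᵥ qc) + Complex.I * (gc ⬝ᵥ (M *ᵥ gc))
        = gc ⬝ᵥ (Gc⁻¹ *ᵥ ((Ac + Hc * Bcᵀ) *ᵥ qc + (Bc + Hc * Dc) *ᵥ pc + Complex.I • gc)) := by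
  classical
  set F : Matrix (Fin n) (Fin n) ℝ →+* Matrix (Fin n) (Fin n) ℂ :=
    Complex.ofRealHom.mapMatrix with hF
  set Ac := A.map Complex.ofReal with hAc
  set Bc := B.map Complex.ofReal with hBc
  set Dc := D.map Complex.ofReal with hDc
  set Hc := H.map Complex.ofReal with hHc
  have hFA : F A = Ac := rfl
  have hFB : F B = Bc := rfl
  have hFD : F D = Dc := rfl
  have hFH : F H = Hc := rfl
  have hFBt : F Bᵀ = Bcᵀ := rfl
  -- transported hypotheses
  have h1' : A * D = 1 + B * B := by rw [← h1]; abel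
  have h1c : Ac * Dc = 1 + Bc * Bc := by
    have := congrArg F h1'
    simpa [_root_.map_mul, _root_.map_add, _root_.map_one, hFA, hFB, hFD] using this
  have h2c : Bcᵀ * Dc = Dc * Bc := by
    have := congrArg F h2
    simpa [_root_.map_mul, hFB, hFD, hFBt] using this
  have hHcs : Hcᵀ = Hc := by
    rw [hHc, ← Matrix.transpose_map, hH.eq]
  have hDcs : Dcᵀ = Dc := by
    rw [hDc, ← Matrix.transpose_map, hD.eq]
  -- the central scalar matrix J
  set J : Matrix (Fin n) (Fin n) ℂ := Complex.I • 1 with hJ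
  have hJc : ∀ M : Matrix (Fin n) (Fin n) ℂ, J * M = M * J := by
    intro M; simp [hJ, smul_mul_assoc, mul_smul_comm]
  have hJM : ∀ M : Matrix (Fin n) (Fin n) ℂ, J * M = Complex.I • M := by
    intro M; simp [hJ, smul_mul_assoc]
  have hJJ : J * J = -1 := by
    simp [hJ, smul_mul_assoc, mul_smul_comm, smul_smul, Complex.I_mul_I]
  set X : Matrix (Fin n) (Fin n) ℂ := Bc + Hc * Dc with hX
  set Y : Matrix (Fin n) (Fin n) ℂ := Bcᵀ + Dc * Hc with hY
  set W : Matrix (Fin n) (Fin n) ℂ := 1 + Complex.I • Bcᵀ + Complex.I • (Dc * Hc) with hW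
  have hWJ : W = 1 + J * Y := by
    rw [hW, hY, hJM, smul_add]; abel
  set P : Matrix (Fin n) (Fin n) ℂ := 1 + J * X with hP
  set Q : Matrix (Fin n) (Fin n) ℂ := 1 - J * X with hQ
  set Gc : Matrix (Fin n) (Fin n) ℂ := (A + B * H + H * Bᵀ + H * D * H).map Complex.ofReal
    with hGc
  have hGce : Gc = Ac + Bc * Hc + Hc * Bcᵀ + Hc * Dc * Hc := by
    have : Gc = F (A + B * H + H * Bᵀ + H * D * H) := rfl
    simp only [this, _root_.map_add, _root_.map_mul, hFA, hFB, hFD, hFH, hFBt]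
  -- units
  have hWu : IsUnit W := hinv
  have hWdet : IsUnit W.det := (isUnit_iff_isUnit_det _).mp hWu
  have hDcu : IsUnit Dc := hDinv.map F
  have hDcdet : IsUnit Dc.det := (isUnit_iff_isUnit_det _).mp hDcu
  -- star W = Q
  have hstar : ∀ Z : Matrix (Fin n) (Fin n) ℝ, star (Z.map Complex.ofReal) =
      Zᵀ.map Complex.ofReal := by
    intro Z; ext i j; simp [conjTranspose_apply, Complex.conj_ofReal]
  have hstarW : star W = Q := by
    have hsB : star (Bcᵀ : Matrix (Fin n) (Fin n) ℂ) = Bc := by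
      rw [hBc, ← Matrix.transpose_map, hstar, Matrix.transpose_transpose]
    have hsDH : star (Dc * Hc) = Hc * Dc := by
      rw [Matrix.star_mul, hDc, hHc, hstar, hstar, hD.eq, hH.eq]
    rw [hW, hQ]
    rw [star_add, star_add, star_one, star_smul, star_smul, hsB, hsDH]
    simp only [Complex.star_def, Complex.conj_I, hJM, hX, smul_add, neg_smul]
    abel
  have hQu : IsUnit Q := hstarW ▸ hWu.star
  have hQdet : IsUnit Q.det := (isUnit_iff_isUnit_det _).mp hQu
  -- Dc * P = W * Dc
  have hDX : Dc * X = Y * Dc := by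
    rw [hX, hY, mul_add, add_mul, h2c.symm]
    noncomm_ring
  have hDcP : Dc * P = W * Dc := by
    rw [hP, hWJ, mul_add, add_mul, mul_one, one_mul]
    congr 1
    rw [← mul_assoc, ← hJc Dc, mul_assoc, hDX, ← mul_assoc]
  have hPdet : IsUnit P.det := by
    have hdet : Dc.det * P.det = W.det * Dc.det := by
      rw [← det_mul, ← det_mul, hDcP]
    have : P.det = W.det := by
      have h := hdet
      rw [mul_comm W.det Dc.det] at h
      exact hDcdet.mul_left_cancel h
    rw [this]; exact hWdet
  have hPu : IsUnit P := (isUnit_iff_isUnit_det _).mpr hPdet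
  -- P * Q = Q * P = 1 + X * X
  have hPQ : P * Q = Q * P := by rw [hP, hQ]; noncomm_ring
  have hPQe : P * Q = 1 + X * X := by
    have e : J * X * (J * X) = -(X * X) := by
      rw [← mul_assoc, mul_assoc J X J, ← hJc X, ← mul_assoc, hJJ]
      noncomm_ring
    rw [hP, hQ]
    calc (1 + J * X) * (1 - J * X) = 1 - J * X * (J * X) := by noncomm_ring
    _ = 1 + X * X := by rw [e]; abel
  -- Gc * Dc = P * Q
  have hGD : Gc * Dc = P * Q := by
    have e1 : Gc * Dc = Ac * Dc + Bc * (Hc * Dc) + Hc * (Bcᵀ * Dc)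
        + Hc * Dc * (Hc * Dc) := by rw [hGce]; noncomm_ring
    rw [h1c, h2c] at e1
    rw [hPQe, e1, hX]
    noncomm_ring
  -- Gc is a unit
  have hGcdet : IsUnit Gc.det := by
    have : IsUnit (Gc.det * Dc.det) := by
      rw [← det_mul, hGD, det_mul]; exact hPdet.mul hQdet
    exact isUnit_of_mul_isUnit_left this
  have hGcu : IsUnit Gc := (isUnit_iff_isUnit_det _).mpr hGcdet
  -- real G is a unit
  have hGu : IsUnit (A + B * H + H * Bᵀ + H * D * H) := by
    rw [isUnit_iff_isUnit_det]
    have hdet : Gc.det = Complex.ofRealHom ((A + B * H + H * Bᵀ + H * D * H).det) := by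
      rw [RingHom.map_det]
      rfl
    rw [hdet] at hGcdet
    have : (A + B * H + H * Bᵀ + H * D * H).det ≠ 0 := by
      intro h0
      rw [h0] at hGcdet
      simp at hGcdet
    exact this.isUnit
  refine ⟨hGu, ?_⟩
  -- key matrix identities
  have hWinvD : W⁻¹ * Dc = Dc * P⁻¹ := by
    have h := congrArg (fun Z => W⁻¹ * Z * P⁻¹) hDcP
    calc W⁻¹ * Dc = W⁻¹ * Dc * (P * P⁻¹) := by
          rw [mul_nonsing_inv _ hPdet, mul_one]
    _ = W⁻¹ * (Dc * P) * P⁻¹ := by noncomm_ring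
    _ = W⁻¹ * (W * Dc) * P⁻¹ := by rw [hDcP]
    _ = (W⁻¹ * W) * Dc * P⁻¹ := by noncomm_ring
    _ = Dc * P⁻¹ := by rw [nonsing_inv_mul _ hWdet, one_mul]
  have hKey : Gc * (J * (W⁻¹ * Dc)) = X + J := by
    rw [hWinvD]
    calc Gc * (J * (Dc * P⁻¹)) = J * ((Gc * Dc) * P⁻¹) := by
          rw [← mul_assoc, ← hJc Gc]; noncomm_ring
    _ = J * (Q * (P * P⁻¹)) := by rw [hGD, hPQ, mul_assoc]
    _ = J * Q := by rw [mul_nonsing_inv _ hPdet, mul_one]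
    _ = X + J := by
          rw [hQ, mul_sub, mul_one, ← mul_assoc, hJJ]
          noncomm_ring
  have hKey2 : Gc⁻¹ * (X + J) = J * (W⁻¹ * Dc) := by
    rw [← hKey, ← mul_assoc, nonsing_inv_mul _ hGcdet, one_mul]
  -- the vector identity
  intro q' p'
  simp only [← hAc, ← hBc, ← hDc, ← hHc, ← hGc, ← hW]
  set qc : Fin n → ℂ := fun i => (q' i : ℂ) with hqc
  set pc : Fin n → ℂ := fun i => (p' i : ℂ) with hpc
  set gc : Fin n → ℂ := pc - Hc *ᵥ qc with hgc
  set M : Matrix (Fin n) (Fin n) ℂ := W⁻¹ * Dc with hM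
  -- the argument vector equals Gc *ᵥ qc + (X + J) *ᵥ gc
  have hveq : (Ac + Hc * Bcᵀ) *ᵥ qc + (Bc + Hc * Dc) *ᵥ pc + Complex.I • gc
      = Gc *ᵥ qc + (X + J) *ᵥ gc := by
    have hGX : Gc = (Ac + Hc * Bcᵀ) + X * Hc := by
      rw [hGce, hX]; noncomm_ring
    have hJg : J *ᵥ gc = Complex.I • gc := by
      rw [hJ, smul_mulVec, one_mulVec]
    have e : X *ᵥ gc = X *ᵥ pc - (X * Hc) *ᵥ qc := by
      rw [hgc, mulVec_sub, mulVec_mulVec]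
    rw [add_mulVec X J, hJg, e, hGX]
    simp only [hX, add_mulVec]
    abel
  rw [hveq, mulVec_add, mulVec_mulVec, mulVec_mulVec, nonsing_inv_mul _ hGcdet,
    one_mulVec, hKey2, hJM, smul_mulVec]
  rw [dotProduct_add, dotProduct_smul, smul_eq_mul]
  have hdot : gc ⬝ᵥ qc = pc ⬝ᵥ qc - qc ⬝ᵥ (Hc *ᵥ qc) := by
    have : qc ⬝ᵥ (Hc *ᵥ qc) = (Hc *ᵥ qc) ⬝ᵥ qc := by
      rw [dotProduct_mulVec, ← mulVec_transpose, hHcs]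
    rw [hgc, sub_dotProduct, this]
  rw [hdot]
end

section
/- Let k ≥ 1 be an integer and let z, w ∈ ℂ with Im z > 0 and Im w > 0. Then the series ∑_{l=0}^∞ (2^{4k−2}/π) · ((2k+l−1)!/((2k−2)!·l!)) · (z−i)^l·(conj(w)+i)^l / ((z+i)^{l+2k}·(conj(w)−i)^{l+2k}) converges (HasSum) with sum A_k · (z − conj(w))^{−2k}, where A_k = (−1)^k · 2^{2k−2} · (2k−1)/π. -/
open Complex (I)

private lemma stmt8_aux_abs (x : ℂ) (hx : 0 < x.im) :
    ‖x - I‖ < ‖x + I‖ := by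
  have h : (‖x - I‖)^2 < (‖x + I‖)^2 := by
    rw [Complex.sq_norm, Complex.sq_norm, Complex.normSq_apply, Complex.normSq_apply]
    simp only [Complex.sub_re, Complex.sub_im, Complex.add_re, Complex.add_im,
      Complex.I_re, Complex.I_im]
    nlinarith
  exact lt_of_pow_lt_pow_left₀ 2 (by positivity) h

/-- expansion of the reproducing kernel over the orthonormal basis:
for `z, w` in the upper half-plane, the series
`∑_l (2^{4k−2}/π)((2k+l−1)!/((2k−2)! l!)) (z−i)^l (conj w + i)^l /((z+i)^{l+2k}(conj w − i)^{l+2k})`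
sums to `A_k (z − conj w)^{−2k}` with `A_k = (−1)^k 2^{2k−2}(2k−1)/π`. -/
theorem stmt8 (k : ℕ) (hk : 1 ≤ k) (z w : ℂ) (hz : 0 < z.im) (hw : 0 < w.im) :
    HasSum (fun l : ℕ =>
      (((2 : ℝ) ^ (4 * k - 2) / Real.pi : ℝ) : ℂ) *
        ((Nat.factorial (2 * k + l - 1) : ℂ) /
          ((Nat.factorial (2 * k - 2) : ℂ) * (Nat.factorial l : ℂ))) *
        (z - Complex.I) ^ l * ((starRingEnd ℂ) w + Complex.I) ^ l /
        ((z + Complex.I) ^ (l + 2 * k) * ((starRingEnd ℂ) w - Complex.I) ^ (l + 2 * k)))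
      (((((-1 : ℝ) ^ k * 2 ^ (2 * k - 2) * (2 * (k : ℝ) - 1) / Real.pi : ℝ)) : ℂ) *
        (z - (starRingEnd ℂ) w) ^ (-(2 * (k : ℤ)))) := by
  obtain ⟨m, rfl⟩ : ∃ m, k = m + 1 := ⟨k - 1, by omega⟩
  set wb := (starRingEnd ℂ) w with hwb
  have hzI : z + I ≠ 0 := by
    intro h
    have := congrArg Complex.im h
    simp only [Complex.add_im, Complex.I_im, Complex.zero_im] at this
    linarith
  have hwI : wb - I ≠ 0 := by
    intro h
    have := congrArg Complex.im h
    simp only [hwb, Complex.sub_im, Complex.conj_im, Complex.I_im, Complex.zero_im] at this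
    linarith
  have hzw : z - wb ≠ 0 := by
    intro h
    have := congrArg Complex.im h
    simp only [hwb, Complex.sub_im, Complex.conj_im, Complex.zero_im] at this
    linarith
  set N : ℂ := (z - I) * (wb + I) with hN
  set D : ℂ := (z + I) * (wb - I) with hD
  have hDne : D ≠ 0 := mul_ne_zero hzI hwI
  set u : ℂ := N / D with hu
  have habs1 : ‖z - I‖ < ‖z + I‖ := stmt8_aux_abs z hz
  have habs2 : ‖wb + I‖ < ‖wb - I‖ := by
    have h1 : wb + I = (starRingEnd ℂ) (w - I) := by
      rw [map_sub, Complex.conj_I, hwb]; ring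
    have h2 : wb - I = (starRingEnd ℂ) (w + I) := by
      rw [map_add, Complex.conj_I, hwb]; ring
    rw [h1, h2, Complex.norm_conj, Complex.norm_conj]
    exact stmt8_aux_abs w hw
  have hu1 : ‖u‖ < 1 := by
    rw [hu, norm_div]
    rw [div_lt_one (by simpa using (norm_pos_iff.2 hDne))]
    simp only [hN, hD, norm_mul]
    exact mul_lt_mul'' habs1 habs2 (norm_nonneg _) (norm_nonneg _)
  have key := (hasSum_choose_mul_geometric_of_norm_lt_one (2 * m + 1) hu1).mul_left
    ((((2 : ℝ) ^ (4 * (m + 1) - 2) / Real.pi : ℝ) : ℂ) * (2 * m + 1) / D ^ (2 * (m + 1)))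
  have hDN : D - N = -2 * I * (z - wb) := by rw [hD, hN]; ring
  have h1mu : 1 - u = (-2 * I * (z - wb)) / D := by
    rw [hu, one_sub_div hDne, hDN]
  convert key using 1
  · rfl
  · funext l
    have hfact : ((2 * (m + 1) + l - 1).factorial : ℂ) =
        ((l + (2 * m + 1)).choose (2 * m + 1) : ℂ) * (2 * m + 1) *
          ((2 * (m + 1) - 2).factorial : ℂ) * (l.factorial : ℂ) := by
      have hnat : (2 * (m + 1) + l - 1).factorial =
          (l + (2 * m + 1)).choose (2 * m + 1) * ((2 * m + 1) * (2 * m).factorial) *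
            l.factorial := by
        have h1 : 2 * (m + 1) + l - 1 = l + (2 * m + 1) := by omega
        rw [h1, ← Nat.factorial_succ]
        have := Nat.choose_mul_factorial_mul_factorial
          (show 2 * m + 1 ≤ l + (2 * m + 1) by omega) (n := l + (2 * m + 1))
        simpa [Nat.add_sub_cancel, mul_assoc, mul_comm] using this.symm
      have h2 : 2 * (m + 1) - 2 = 2 * m := by omega
      rw [h2]
      push_cast [hnat]
      ring
    have hfl : (l.factorial : ℂ) ≠ 0 := Nat.cast_ne_zero.2 l.factorial_ne_zero
    have hf2 : ((2 * (m + 1) - 2).factorial : ℂ) ≠ 0 :=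
      Nat.cast_ne_zero.2 (Nat.factorial_ne_zero _)
    have hratio : ((2 * (m + 1) + l - 1).factorial : ℂ) /
        (((2 * (m + 1) - 2).factorial : ℂ) * (l.factorial : ℂ)) =
        ((l + (2 * m + 1)).choose (2 * m + 1) : ℂ) * (2 * m + 1) := by
      rw [hfact]; field_simp
    have hupow : u ^ l = N ^ l / D ^ l := div_pow N D l
    have hDpow : (z + I) ^ (l + 2 * (m + 1)) * (wb - I) ^ (l + 2 * (m + 1)) =
        D ^ (l + 2 * (m + 1)) := (mul_pow _ _ _).symm
    have hDl2 : D ^ (l + 2 * (m + 1)) = D ^ l * D ^ (2 * (m + 1)) := by rw [← pow_add]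
    have hNpow : N ^ l = (z - I) ^ l * (wb + I) ^ l := mul_pow _ _ _
    rw [hDpow, hratio, hupow, hNpow, hDl2]
    have hDl : (D : ℂ) ^ l ≠ 0 := pow_ne_zero _ hDne
    have hD2 : (D : ℂ) ^ (2 * (m + 1)) ≠ 0 := pow_ne_zero _ hDne
    field_simp
  · rw [h1mu]
    have hX : (-2 * I * (z - wb)) ≠ 0 :=
      mul_ne_zero (mul_ne_zero (by norm_num) Complex.I_ne_zero) hzw
    rw [show 2 * m + 1 + 1 = 2 * (m + 1) from by omega, div_pow, one_div, inv_div,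
      mul_div_assoc', div_mul_cancel₀ _ (pow_ne_zero _ hDne)]
    have hpow : (-2 * I * (z - wb)) ^ (2 * (m + 1)) =
        (-1 : ℂ) ^ (m + 1) * 2 ^ (2 * m + 2) * (z - wb) ^ (2 * (m + 1)) := by
      rw [mul_pow, mul_pow, pow_mul (-2 : ℂ), pow_mul I, Complex.I_sq,
        show ((-2 : ℂ) ^ 2) = 2 ^ 2 from by norm_num, ← pow_mul,
        show 2 * (m + 1) = 2 * m + 2 from by omega]
      ring
    rw [hpow]
    have hzpow : (z - wb) ^ (-(2 * ((m + 1 : ℕ) : ℤ))) =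
        ((z - wb) ^ (2 * (m + 1)))⁻¹ := by
      rw [← zpow_natCast (z - wb) (2 * (m + 1)), ← zpow_neg]
      norm_num
    rw [hzpow]
    have hP : (z - wb) ^ (2 * (m + 1)) ≠ 0 := pow_ne_zero _ hzw
    have hne1 : ((-1 : ℂ)) ^ (m + 1) ≠ 0 := pow_ne_zero _ (by norm_num)
    have h2ne : ((2 : ℂ)) ^ (2 * m + 2) ≠ 0 := pow_ne_zero _ two_ne_zero
    have hpi : (Real.pi : ℂ) ≠ 0 := Complex.ofReal_ne_zero.2 Real.pi_ne_zero
    have hsq : ((-1 : ℂ) ^ (m + 1)) ^ 2 = 1 := by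
      rw [← pow_mul, mul_comm, pow_mul]; norm_num
    rw [eq_div_iff (mul_ne_zero (mul_ne_zero hne1 h2ne) hP),
      show 2 * (m + 1) - 2 = 2 * m from by omega,
      show 4 * (m + 1) - 2 = 2 * m + (2 * m + 2) from by omega]
    push_cast
    field_simp
    ring_nf
    simp only [show ((-1 : ℂ)) ^ (m * 2) = 1 from by rw [Nat.mul_comm m 2, pow_mul]; norm_num, one_mul, mul_one]
end

section
/- Let k ≥ 1 be an integer and let z ∈ ℂ with Im z > 0. Then ∫_{−∞}^{∞} e^{kt} · (z + i e^t)^{−2k} dt = (−i)^k · ((k−1)!)² / (2k−1)! · z^{−k}. -/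
open MeasureTheory Real Filter Set Topology

namespace Stmt10Aux

noncomputable def P (k : ℕ) : ℂ → ℂ := fun s =>
  ∑ j ∈ Finset.range k, ((-1 : ℂ) ^ j * ((k - 1).choose j : ℂ) / ((k : ℂ) + j)) * s ^ (k + j)

lemma P_zero {k : ℕ} (hk : 1 ≤ k) : P k 0 = 0 := by
  unfold P
  refine Finset.sum_eq_zero fun j hj => ?_
  rw [zero_pow (by omega), mul_zero]

lemma P_hasDerivAt {k : ℕ} (hk : 1 ≤ k) (s : ℂ) :
    HasDerivAt (P k) (s ^ (k - 1) * (1 - s) ^ (k - 1)) s := by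
  have h : HasDerivAt (P k)
      (∑ j ∈ Finset.range k, (-1 : ℂ) ^ j * ((k - 1).choose j : ℂ) * s ^ (k - 1 + j)) s := by
    refine HasDerivAt.fun_sum fun j hj => ?_
    have h1 : HasDerivAt (fun s : ℂ => ((-1 : ℂ) ^ j * ((k - 1).choose j : ℂ) / ((k : ℂ) + j)) * s ^ (k + j))
        (((-1 : ℂ) ^ j * ((k - 1).choose j : ℂ) / ((k : ℂ) + j)) * ((k + j : ℕ) * s ^ (k + j - 1))) s :=
      (hasDerivAt_pow (k + j) s).const_mul _
    refine h1.congr_deriv (Eq.symm ?_)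
    have hne : (k : ℂ) + j ≠ 0 := by
      have : ((k + j : ℕ) : ℂ) ≠ 0 := Nat.cast_ne_zero.mpr (by omega)
      push_cast at this ⊢; exact this
    have he : k + j - 1 = k - 1 + j := by omega
    rw [he]
    field_simp
    push_cast
    ring
  convert h using 1
  have hb : (1 - s) ^ (k - 1) = ∑ j ∈ Finset.range k, (-s) ^ j * ((k - 1).choose j : ℂ) := by
    have := add_pow (-s) 1 (k - 1)
    simp only [one_pow, mul_one] at this
    have hr : k - 1 + 1 = k := by omega
    rw [show (1 : ℂ) - s = -s + 1 by ring, this, hr]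
  rw [hb, Finset.mul_sum]
  refine Finset.sum_congr rfl fun j hj => ?_
  rw [pow_add, neg_pow]
  ring

lemma P_one {k : ℕ} (hk : 1 ≤ k) :
    P k 1 = ((k - 1).factorial : ℂ) ^ 2 / ((2 * k - 1).factorial : ℂ) := by
  have hderiv : ∀ x ∈ Set.uIcc (0 : ℝ) 1, HasDerivAt (fun x : ℝ => P k x)
      ((x : ℂ) ^ (k - 1) * (1 - (x : ℂ)) ^ (k - 1)) x := fun x _ =>
    (P_hasDerivAt hk (x : ℂ)).comp_ofReal
  have hcont : Continuous fun x : ℝ => (x : ℂ) ^ (k - 1) * (1 - (x : ℂ)) ^ (k - 1) := by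
    fun_prop
  have hftc := intervalIntegral.integral_eq_sub_of_hasDerivAt hderiv
    (hcont.intervalIntegrable 0 1)
  rw [Complex.ofReal_one, Complex.ofReal_zero, P_zero hk, sub_zero] at hftc
  -- relate to betaIntegral
  have hkc : ((k : ℂ) : ℂ) - 1 = ((k - 1 : ℕ) : ℂ) := by push_cast [hk]; ring
  have hbeta : Complex.betaIntegral k k
      = ∫ x in (0:ℝ)..1, (x : ℂ) ^ (k - 1) * (1 - (x : ℂ)) ^ (k - 1) := by
    unfold Complex.betaIntegral
    refine intervalIntegral.integral_congr fun x _ => ?_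
    rw [hkc, Complex.cpow_natCast, Complex.cpow_natCast]
  have hgamma := Complex.Gamma_mul_Gamma_eq_betaIntegral
    (s := (k : ℂ)) (t := (k : ℂ)) (by simp; omega) (by simp; omega)
  have hGk : Complex.Gamma (k : ℂ) = ((k - 1).factorial : ℂ) := by
    have : ((k : ℂ)) = ((k - 1 : ℕ) : ℂ) + 1 := by push_cast [hk]; ring
    rw [this, Complex.Gamma_nat_eq_factorial]
  have hG2k : Complex.Gamma ((k : ℂ) + (k : ℂ)) = ((2 * k - 1).factorial : ℂ) := by
    have h2k : 1 ≤ 2 * k := by omega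
    have : ((k : ℂ)) + (k : ℂ) = ((2 * k - 1 : ℕ) : ℂ) + 1 := by push_cast [h2k]; ring
    rw [this, Complex.Gamma_nat_eq_factorial]
  have hG2k_ne : ((2 * k - 1).factorial : ℂ) ≠ 0 := by
    exact_mod_cast Nat.cast_ne_zero.mpr (Nat.factorial_ne_zero _)
  rw [hGk, hG2k] at hgamma
  rw [← hftc, ← hbeta]
  rw [eq_div_iff hG2k_ne]
  rw [sq]
  linear_combination -hgamma

end Stmt10Aux


/-- integral of the weight-`2k` coherent states along the horizontal
lift of the geodesic `ξ(t) = ie^t`: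
`∫ℝ e^{kt}(z + ie^t)^{−2k} dt = (−i)^k ((k−1)!)²/(2k−1)! · z^{−k}`. -/
theorem stmt10 (k : ℕ) (hk : 1 ≤ k) (z : ℂ) (hz : 0 < z.im) :
    ∫ t : ℝ, (Real.exp (k * t) : ℂ) *
        (z + Complex.I * Real.exp t) ^ (-(2 * (k : ℤ))) =
      (-Complex.I) ^ k * ((Nat.factorial (k - 1) : ℂ)) ^ 2 /
        (Nat.factorial (2 * k - 1) : ℂ) * z ^ (-(k : ℤ)) := by
  obtain ⟨m, rfl⟩ : ∃ m, k = m + 1 := ⟨k - 1, (Nat.succ_pred_eq_of_pos hk).symm⟩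
  set k := m + 1 with hk_def
  set a : ℂ := -Complex.I * z with ha_def
  have haRe : a.re = z.im := by simp [ha_def]
  have ha : a ≠ 0 := by
    intro h
    rw [h] at haRe
    simp at haRe
    exact absurd haRe.symm (ne_of_gt hz)
  have hd : ∀ t : ℝ, (Real.exp t : ℂ) + a ≠ 0 := by
    intro t h
    have h2 := congrArg Complex.re h
    simp only [Complex.add_re, Complex.ofReal_re, haRe, Complex.zero_re] at h2
    nlinarith [Real.exp_pos t, hz]
  have hkey : ∀ w : ℂ, z + Complex.I * w = Complex.I * (w + a) := by
    intro w
    rw [ha_def]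
    linear_combination z * Complex.I_sq
  clear_value a
  -- the antiderivative
  set F : ℝ → ℂ := fun t => ((-1 : ℂ) ^ k / a ^ k) * Stmt10Aux.P k ((Real.exp t : ℂ) / ((Real.exp t : ℂ) + a)) with hF_def
  set f : ℝ → ℂ := fun t => (Real.exp (k * t) : ℂ) * (z + Complex.I * Real.exp t) ^ (-(2 * (k : ℤ))) with hf_def
  -- rewrite f in inverse form
  have hf_eq : ∀ t : ℝ, f t = ((-1 : ℂ) ^ k / a ^ k) *
      (((Real.exp t : ℂ)) ^ k * a ^ k * ((((Real.exp t : ℂ) + a)) ^ (2 * k))⁻¹) := by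
    intro t
    have h1 : (z + Complex.I * Real.exp t) ^ (-(2 * (k : ℤ)))
        = (((z + Complex.I * Real.exp t)) ^ (2 * k))⁻¹ := by
      rw [← zpow_natCast (z + Complex.I * Real.exp t) (2 * k), ← zpow_neg]
      push_cast
      ring_nf
    have h2 : (z + Complex.I * (Real.exp t : ℂ)) ^ (2 * k)
        = (-1 : ℂ) ^ k * ((Real.exp t : ℂ) + a) ^ (2 * k) := by
      rw [hkey, mul_pow, pow_mul, Complex.I_sq]
    have h3 : (Real.exp (k * t) : ℂ) = ((Real.exp t : ℂ)) ^ k := by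
      rw [Real.exp_nat_mul]; push_cast; ring
    rw [hf_def]
    simp only
    rw [h1, h2, h3, mul_inv]
    have hm1 : ((-1 : ℂ) ^ k)⁻¹ = (-1 : ℂ) ^ k := by
      rw [← inv_pow]; norm_num
    rw [hm1, div_mul_eq_mul_div, eq_div_iff (pow_ne_zero k ha)]
    ring
  have hPcont : Continuous (Stmt10Aux.P k) := by
    unfold Stmt10Aux.P
    exact continuous_finset_sum _ fun j _ => continuous_const.mul (continuous_pow _)
  have hc : ∀ t : ℝ, HasDerivAt (fun t : ℝ => ((Real.exp t : ℝ) : ℂ)) ((Real.exp t : ℂ)) t :=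
    fun t => (Real.hasDerivAt_exp t).ofReal_comp
  have hFderiv : ∀ t : ℝ, HasDerivAt F (f t) t := by
    intro t
    have hφ : HasDerivAt (fun t : ℝ => (Real.exp t : ℂ) / ((Real.exp t : ℂ) + a))
        (((Real.exp t : ℂ) * ((Real.exp t : ℂ) + a) - (Real.exp t : ℂ) * (Real.exp t : ℂ)) /
          ((Real.exp t : ℂ) + a) ^ 2) t :=
      (hc t).div ((hc t).add_const a) (hd t)
    have hP := (Stmt10Aux.P_hasDerivAt hk ((Real.exp t : ℂ) / ((Real.exp t : ℂ) + a))).comp t hφ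
    have hPC := hP.const_mul ((-1 : ℂ) ^ k / a ^ k)
    refine hPC.congr_deriv (Eq.symm ?_)
    rw [hf_eq t]
    set c : ℂ := ((Real.exp t : ℝ) : ℂ) with hc_def
    have hca : c + a ≠ 0 := hd t
    have hsub : (1 : ℂ) - c / (c + a) = a / (c + a) := by field_simp; ring
    rw [hsub, div_pow, div_pow]
    congr 1
    field_simp
    simp only [hk_def, Nat.add_sub_cancel, Nat.add_sub_cancel_left]
    ring
  have hc0 : Tendsto (fun t : ℝ => ((Real.exp t : ℝ) : ℂ)) atBot (𝓝 0) := by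
    rw [show ((0 : ℂ)) = (((0 : ℝ) : ℂ)) by norm_num]
    exact (Complex.continuous_ofReal.tendsto 0).comp Real.tendsto_exp_atBot
  have hbot : Tendsto F atBot (𝓝 0) := by
    have hφ0 : Tendsto (fun t : ℝ => (Real.exp t : ℂ) / ((Real.exp t : ℂ) + a)) atBot (𝓝 0) := by
      have h1 := hc0.div (hc0.add (tendsto_const_nhds (x := a))) (show (0:ℂ) + a ≠ 0 by simpa using ha)
      rw [zero_div] at h1
      exact h1
    have hP0 := (hPcont.tendsto 0).comp hφ0
    rw [Stmt10Aux.P_zero hk] at hP0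
    have h4 := hP0.const_mul ((-1 : ℂ) ^ k / a ^ k)
    rw [mul_zero] at h4
    exact h4
  have htop : Tendsto F atTop (𝓝 (((-1 : ℂ) ^ k / a ^ k) * Stmt10Aux.P k 1)) := by
    have hinv : Tendsto (fun t : ℝ => (Real.exp t)⁻¹) atTop (𝓝 0) :=
      Real.tendsto_exp_atTop.inv_tendsto_atTop
    have h1 : Tendsto (fun t : ℝ => a * ((Real.exp t : ℂ))⁻¹) atTop (𝓝 0) := by
      have h2 : Tendsto (fun t : ℝ => (((Real.exp t)⁻¹ : ℝ) : ℂ)) atTop (𝓝 0) := by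
        rw [show ((0 : ℂ)) = (((0 : ℝ) : ℂ)) by norm_num]
        exact (Complex.continuous_ofReal.tendsto 0).comp hinv
      have h3 := h2.const_mul a
      simp only [mul_zero] at h3
      refine h3.congr fun t => ?_
      push_cast
      ring
    have hφ1 : Tendsto (fun t : ℝ => (Real.exp t : ℂ) / ((Real.exp t : ℂ) + a)) atTop (𝓝 1) := by
      have h2 : Tendsto (fun t : ℝ => ((1 : ℂ) + a * ((Real.exp t : ℂ))⁻¹)) atTop (𝓝 1) := by
        simpa using tendsto_const_nhds.add h1
      have h3 := h2.inv₀ (by norm_num)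
      rw [inv_one] at h3
      refine h3.congr fun t => ?_
      have he : ((Real.exp t : ℝ) : ℂ) ≠ 0 := by
        simpa using (Real.exp_pos t).ne'
      field_simp
    exact ((hPcont.tendsto 1).comp hφ1).const_mul _
  have hmeas : Continuous f := by
    rw [hf_def]
    refine Continuous.mul (by fun_prop) ?_
    refine Continuous.zpow₀ (by fun_prop) _ fun t => Or.inl ?_
    rw [hkey]
    exact mul_ne_zero Complex.I_ne_zero (hd t)
  have hnorm : ∀ t : ℝ, ‖f t‖ =
      Real.exp (k * t) * ((‖z + Complex.I * Real.exp t‖ ^ (2 * k))⁻¹) := by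
    intro t
    rw [hf_def]
    simp only
    rw [show (-(2 * (k : ℤ))) = -((2 * k : ℕ) : ℤ) by push_cast; ring, zpow_neg, zpow_natCast,
      norm_mul, norm_inv, norm_pow, Complex.norm_real, Real.norm_eq_abs,
      abs_of_pos (Real.exp_pos _)]
  have him : ∀ t : ℝ, Real.exp t + z.im ≤ ‖z + Complex.I * Real.exp t‖ := by
    intro t
    have h1 : (z + Complex.I * ((Real.exp t : ℝ) : ℂ)).im = z.im + Real.exp t := by
      simp [Complex.add_im, Complex.mul_im, Complex.exp_ofReal_re]
    calc Real.exp t + z.im = |(z + Complex.I * ((Real.exp t : ℝ) : ℂ)).im| := by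
          rw [h1, abs_of_pos (by positivity)]; ring
    _ ≤ ‖z + Complex.I * ((Real.exp t : ℝ) : ℂ)‖ := by
          exact Complex.abs_im_le_norm _
  have hkpos : (0 : ℝ) < k := by positivity
  have hIoi : IntegrableOn f (Ioi (0 : ℝ)) := by
    refine Integrable.mono' (exp_neg_integrableOn_Ioi 0 hkpos)
      hmeas.aestronglyMeasurable.restrict ?_
    filter_upwards [ae_restrict_mem measurableSet_Ioi] with t _
    rw [hnorm t]
    have hw : Real.exp t ≤ ‖z + Complex.I * Real.exp t‖ := by
      nlinarith [him t, hz]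
    have h2 : Real.exp t ^ (2 * k) ≤ ‖z + Complex.I * Real.exp t‖ ^ (2 * k) :=
      pow_le_pow_left₀ (Real.exp_pos t).le hw _
    have h3 : (‖z + Complex.I * Real.exp t‖ ^ (2 * k))⁻¹ ≤ (Real.exp t ^ (2 * k))⁻¹ :=
      inv_anti₀ (by positivity) h2
    calc Real.exp (k * t) * (‖z + Complex.I * Real.exp t‖ ^ (2 * k))⁻¹
        ≤ Real.exp (k * t) * (Real.exp t ^ (2 * k))⁻¹ := by
          exact mul_le_mul_of_nonneg_left h3 (Real.exp_pos _).le
    _ = Real.exp (-(k : ℝ) * t) := by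
          rw [← Real.exp_nat_mul, ← Real.exp_neg, ← Real.exp_add]
          congr 1
          push_cast
          ring
  have hIic : IntegrableOn f (Iic (0 : ℝ)) := by
    refine Integrable.mono' ((integrableOn_exp_Iic 0).const_mul ((z.im ^ (2 * k))⁻¹))
      hmeas.aestronglyMeasurable.restrict ?_
    filter_upwards [ae_restrict_mem measurableSet_Iic] with t ht
    rw [hnorm t]
    have hw : z.im ≤ ‖z + Complex.I * Real.exp t‖ := by
      nlinarith [him t, Real.exp_pos t]
    have h2 : z.im ^ (2 * k) ≤ ‖z + Complex.I * Real.exp t‖ ^ (2 * k) :=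
      pow_le_pow_left₀ hz.le hw _
    have h3 : (‖z + Complex.I * Real.exp t‖ ^ (2 * k))⁻¹ ≤ (z.im ^ (2 * k))⁻¹ :=
      inv_anti₀ (by positivity) h2
    have h4 : Real.exp (k * t) ≤ Real.exp t := by
      apply Real.exp_le_exp.mpr
      have ht' : t ≤ 0 := ht
      have hk1 : (1 : ℝ) ≤ (k : ℝ) := by exact_mod_cast hk
      nlinarith
    calc Real.exp (k * t) * (‖z + Complex.I * Real.exp t‖ ^ (2 * k))⁻¹
        ≤ Real.exp t * (z.im ^ (2 * k))⁻¹ :=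
          mul_le_mul h4 h3 (by positivity) (Real.exp_pos _).le
    _ = (z.im ^ (2 * k))⁻¹ * Real.exp t := by ring
  have hint : Integrable f := by
    rw [← integrableOn_univ, ← Set.Iic_union_Ioi (a := (0 : ℝ))]
    exact hIic.union hIoi
  have hval := MeasureTheory.integral_of_hasDerivAt_of_tendsto hFderiv hint hbot htop
  rw [sub_zero] at hval
  rw [hval, Stmt10Aux.P_one hk, ha_def]
  have hzne : z ≠ 0 := by
    intro h
    rw [h] at hz
    simp at hz
  have hfne : (((2 * k - 1).factorial : ℕ) : ℂ) ≠ 0 := Nat.cast_ne_zero.mpr (Nat.factorial_ne_zero _)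
  have hIk : ((-Complex.I) : ℂ) ^ k ≠ 0 := pow_ne_zero _ (by simp [Complex.I_ne_zero])
  rw [zpow_neg, zpow_natCast, mul_pow]
  have hmm : ((-1 : ℂ)) ^ k = (-Complex.I) ^ k * (-Complex.I) ^ k := by
    rw [← mul_pow, neg_mul_neg, Complex.I_mul_I]
  field_simp
  rw [hmm]
  ring
end

section
/- Let k ≥ 1 be an integer, λ > 0 a real number, and z ∈ ℂ with Im z > 0. Then ∫_{−∞}^{∞} e^{ikt/λ} · (z + iλ − t)^{−2k} dt = (2π·(−1)^k / (2k−1)!) · (k/λ)^{2k−1} · e^{−k} · e^{ikz/λ}. -/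
open MeasureTheory Real Set Filter Complex
open scoped Topology FourierTransform

lemma tend0 {r : ℝ} (hr : 0 < r) (n : ℕ) :
    Tendsto (fun u : ℝ => u ^ n * Real.exp (-(r * u))) atTop (𝓝 0) := by
  have h := (isLittleO_pow_exp_pos_mul_atTop n hr).tendsto_div_nhds_zero
  refine h.congr' ?_
  filter_upwards with x
  rw [Real.exp_neg, div_eq_mul_inv]

lemma aux_integrable {b : ℂ} (hb : 0 < b.re) (n : ℕ) :
    IntegrableOn (fun u : ℝ => (u : ℂ) ^ n * Complex.exp (-(b * u))) (Ioi 0) := by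
  have hmaj : IntegrableOn (fun u : ℝ => u ^ n * Real.exp (-(b.re * u))) (Ioi 0) := by
    refine integrable_of_isBigO_exp_neg (half_pos hb) ?_ ?_
    · fun_prop
    · have h1 : (fun x : ℝ => x ^ n) =O[atTop] fun x => Real.exp (b.re / 2 * x) :=
        (isLittleO_pow_exp_pos_mul_atTop n (half_pos hb)).isBigO
      have h2 := h1.mul (Asymptotics.isBigO_refl (fun x : ℝ => Real.exp (-(b.re * x))) atTop)
      refine h2.congr' (by filter_upwards with x using rfl) ?_
      filter_upwards with x
      rw [← Real.exp_add]
      ring_nf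
  refine Integrable.mono' hmaj (Continuous.aestronglyMeasurable (by fun_prop)) ?_
  filter_upwards [ae_restrict_mem measurableSet_Ioi] with u hu
  rw [norm_mul, Complex.norm_exp]
  simp only [norm_pow, Complex.norm_real, Real.norm_eq_abs, abs_of_pos (mem_Ioi.mp hu)]
  simp [mul_comm]

lemma aux_integral {b : ℂ} (hb : 0 < b.re) (n : ℕ) :
    ∫ u in Ioi (0:ℝ), (u : ℂ) ^ n * Complex.exp (-(b * u)) = (n.factorial : ℂ) / b ^ (n + 1) := by
  have hb0 : b ≠ 0 := fun h => by simp [h] at hb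
  induction n with
  | zero =>
      have hd : ∀ x ∈ Ioi (0:ℝ), HasDerivAt (fun u : ℝ => -(Complex.exp (-(b * u)) / b))
          ((x:ℂ) ^ 0 * Complex.exp (-(b * x))) x := by
        intro x _
        have h1 : HasDerivAt (fun w : ℂ => Complex.exp (-(b * w)))
            (Complex.exp (-(b * x)) * (-b)) (x : ℂ) := by
          simpa using (((hasDerivAt_id ((x:ℝ):ℂ)).const_mul b).neg).cexp
        have h2 := (h1.comp_ofReal.div_const b).neg
        refine h2.congr_deriv ?_
        field_simp
      have ht : Tendsto (fun u : ℝ => -(Complex.exp (-(b * u)) / b)) atTop (𝓝 0) := by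
        apply squeeze_zero_norm _ (by simpa using (tend0 hb 0).const_mul (‖b‖⁻¹))
        intro u
        rw [norm_neg, norm_div, Complex.norm_exp]
        simp only [neg_re, mul_re, Complex.ofReal_re, Complex.ofReal_im, mul_im]
        rw [div_eq_mul_inv]
        ring_nf
        simp [mul_comm]
      have := integral_Ioi_of_hasDerivAt_of_tendsto (Continuous.continuousWithinAt (by fun_prop)) hd
        (aux_integrable hb 0) ht
      rw [this]
      simp
  | succ n ih =>
      set F : ℝ → ℂ := fun u => -((u:ℂ) ^ (n+1) * Complex.exp (-(b * u)) / b) with hF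
      set G : ℝ → ℂ := fun u => (u:ℂ) ^ (n+1) * Complex.exp (-(b * u))
        - ((n+1 : ℂ)/b) * ((u:ℂ) ^ n * Complex.exp (-(b * u))) with hG
      have hd : ∀ x ∈ Ioi (0:ℝ), HasDerivAt F (G x) x := by
        intro x _
        have h1 : HasDerivAt (fun u : ℝ => (u:ℂ) ^ (n+1)) ((n+1 : ℂ) * (x:ℂ) ^ n) x := by
          simpa using (hasDerivAt_pow (n+1) ((x:ℝ):ℂ)).comp_ofReal
        have h2 : HasDerivAt (fun u : ℝ => Complex.exp (-(b * u)))
            (Complex.exp (-(b * x)) * (-b)) x := by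
          exact (by simpa using (((hasDerivAt_id ((x:ℝ):ℂ)).const_mul b).neg).cexp :
            HasDerivAt (fun w : ℂ => Complex.exp (-(b * w)))
              (Complex.exp (-(b * x)) * (-b)) (x:ℂ)).comp_ofReal
        have h3 := ((h1.mul h2).div_const b).neg
        refine h3.congr_deriv ?_
        simp only [hG]
        field_simp
        ring
      have hint : IntegrableOn G (Ioi (0:ℝ)) :=
        (aux_integrable hb (n+1)).sub ((aux_integrable hb n).const_mul ((n+1 : ℂ)/b))
      have ht : Tendsto F atTop (𝓝 0) := by
        apply squeeze_zero_norm' _ (by simpa using (tend0 hb (n+1)).const_mul (‖b‖⁻¹))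
        filter_upwards [eventually_ge_atTop (0:ℝ)] with u hu
        simp only [hF, norm_neg, norm_div, norm_mul, norm_pow, Complex.norm_real,
          Real.norm_eq_abs, Complex.norm_exp,
          _root_.abs_of_nonneg hu, abs_pow]
        simp only [neg_re, mul_re, Complex.ofReal_re, Complex.ofReal_im]
        rw [div_eq_mul_inv]
        ring_nf
        simp [mul_comm]
      have key := integral_Ioi_of_hasDerivAt_of_tendsto
        (Continuous.continuousWithinAt (by fun_prop)) hd hint ht
      have hF0 : F 0 = 0 := by simp [hF]
      rw [hF0, sub_zero] at key
      have hsplit : ∫ u in Ioi (0:ℝ), G u =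
          (∫ u in Ioi (0:ℝ), (u:ℂ) ^ (n+1) * Complex.exp (-(b * u)))
          - ((n+1 : ℂ)/b) * ∫ u in Ioi (0:ℝ), (u:ℂ) ^ n * Complex.exp (-(b * u)) := by
        rw [integral_sub (aux_integrable hb (n+1))
          ((aux_integrable hb n).const_mul ((n+1 : ℂ)/b)), integral_const_mul]
      rw [key, ih] at hsplit
      have : (∫ u in Ioi (0:ℝ), (u:ℂ) ^ (n+1) * Complex.exp (-(b * u)))
          = ((n+1 : ℂ)/b) * ((n.factorial : ℂ) / b ^ (n+1)) := sub_eq_zero.mp hsplit.symm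
      rw [this, Nat.factorial_succ]
      push_cast
      rw [div_mul_div_comm, ← pow_succ']

lemma expl_integrable {c : ℂ} (hc : 0 < c.im) {k : ℕ} (hk : 1 ≤ k) :
    Integrable (fun w : ℝ => ((c - 2 * π * w) ^ (2 * k))⁻¹) := by
  have hne : ∀ w : ℝ, c - 2 * π * w ≠ 0 := by
    intro w h
    have : (c - 2 * π * w).im = c.im := by simp
    rw [h] at this
    simp at this
    exact hc.ne this
  have hcont : Continuous fun w : ℝ => ((c - 2 * π * w) ^ (2 * k))⁻¹ := by
    refine Continuous.inv₀ ?_ (fun w => pow_ne_zero _ (hne w))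
    fun_prop
  have him : c.im ≠ 0 := hc.ne'
  -- integrable majorant
  have h0 : Integrable (fun x : ℝ => (1 + x ^ 2)⁻¹) := integrable_inv_one_add_sq
  have h1 : Integrable (fun x : ℝ => (1 + (-2 * π / c.im * x) ^ 2)⁻¹) := by
    refine (integrable_comp_mul_left_iff (fun x : ℝ => (1 + x ^ 2)⁻¹) ?_).mpr h0
    have := Real.pi_pos
    positivity
  have h2 : Integrable (fun x : ℝ => (1 + ((c.re - 2 * π * x) / c.im) ^ 2)⁻¹) := by
    have := h1.comp_sub_right (c.re / (2 * π))
    refine this.congr ?_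
    filter_upwards with x
    congr 3
    have hπ : (2 * π) ≠ 0 := by have := Real.pi_pos; positivity
    field_simp
    ring
  have h3 : Integrable (fun x : ℝ => (((c.im ^ 2) ^ (k - 1))⁻¹ * (c.im ^ 2)⁻¹) *
      (1 + ((c.re - 2 * π * x) / c.im) ^ 2)⁻¹) := h2.const_mul _
  refine h3.mono' hcont.aestronglyMeasurable ?_
  filter_upwards with w
  have hA : ‖c - 2 * π * w‖ ^ 2 = (c.re - 2 * π * w) ^ 2 + c.im ^ 2 := by
    rw [Complex.sq_norm, Complex.normSq_apply]
    simp only [sub_re, sub_im, mul_re, mul_im, Complex.ofReal_re, Complex.ofReal_im,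
      Complex.re_ofNat, Complex.im_ofNat]
    ring
  have hApos : (0:ℝ) < (c.re - 2 * π * w) ^ 2 + c.im ^ 2 := by positivity
  have hAle : c.im ^ 2 ≤ (c.re - 2 * π * w) ^ 2 + c.im ^ 2 := by nlinarith [sq_nonneg (c.re - 2*π*w)]
  rw [norm_inv, norm_pow]
  calc (‖c - 2 * π * w‖ ^ (2 * k))⁻¹
      = (((c.re - 2 * π * w) ^ 2 + c.im ^ 2) ^ k)⁻¹ := by
        rw [pow_mul, hA]
    _ ≤ ((c.im ^ 2) ^ (k - 1) * ((c.re - 2 * π * w) ^ 2 + c.im ^ 2))⁻¹ := by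
        apply inv_anti₀
        · positivity
        · calc (c.im ^ 2) ^ (k - 1) * ((c.re - 2 * π * w) ^ 2 + c.im ^ 2)
              ≤ ((c.re - 2 * π * w) ^ 2 + c.im ^ 2) ^ (k - 1) *
                ((c.re - 2 * π * w) ^ 2 + c.im ^ 2) := by
                apply mul_le_mul_of_nonneg_right _ hApos.le
                exact pow_le_pow_left₀ (by positivity) hAle _
            _ = ((c.re - 2 * π * w) ^ 2 + c.im ^ 2) ^ k := by
                rw [← pow_succ]
                congr 1
                omega
    _ = (((c.im ^ 2) ^ (k - 1))⁻¹ * (c.im ^ 2)⁻¹) *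
        (1 + ((c.re - 2 * π * w) / c.im) ^ 2)⁻¹ := by
        rw [mul_inv]
        rw [div_pow]
        have h4 : (1 + (c.re - 2 * π * w) ^ 2 / c.im ^ 2)⁻¹ =
            c.im ^ 2 * ((c.re - 2 * π * w) ^ 2 + c.im ^ 2)⁻¹ := by
          rw [inv_eq_iff_eq_inv, mul_inv, inv_inv]
          field_simp
          ring
        rw [h4]
        field_simp

lemma core {c : ℂ} (hc : 0 < c.im) {k : ℕ} (hk : 1 ≤ k) {v : ℝ} (hv : 0 < v) :
    ∫ s : ℝ, Complex.exp (Complex.I * v * s) * ((c - s) ^ (2 * k))⁻¹ =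
      2 * (π : ℂ) * (-1 : ℂ) ^ k / ((2 * k - 1).factorial : ℂ) * (v : ℂ) ^ (2 * k - 1) *
        Complex.exp (Complex.I * c * v) := by
  classical
  set m : ℕ := 2 * k - 1 with hm
  have hm1 : m + 1 = 2 * k := by omega
  set b₀ : ℂ := -(Complex.I * c) with hb₀
  have hb₀re : 0 < b₀.re := by simp [hb₀]; exact hc
  set f : ℝ → ℂ := (Ioi (0:ℝ)).indicator
    (fun u => (u : ℂ) ^ m * Complex.exp (-(b₀ * u))) with hf
  have hne : ∀ w : ℝ, c - 2 * π * w ≠ 0 := by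
    intro w h
    have h2 : (c - 2 * π * w).im = c.im := by simp
    rw [h] at h2
    simp at h2
    exact hc.ne h2
  -- Fourier transform of f
  have hFf : ∀ w : ℝ, 𝓕 f w =
      (m.factorial : ℂ) * ((-1 : ℂ) ^ k * ((c - 2 * π * w) ^ (2 * k))⁻¹) := by
    intro w
    rw [Real.fourier_eq']
    have hrw : (fun u : ℝ => Complex.exp ((-2 * π * (inner ℝ u w : ℝ) : ℝ) * Complex.I) • f u)
        = (Ioi (0:ℝ)).indicator
          (fun u => (u : ℂ) ^ m * Complex.exp (-((b₀ + 2 * π * w * Complex.I) * u))) := by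
      funext u
      by_cases hu : u ∈ Ioi (0:ℝ)
      · rw [hf, indicator_of_mem hu, indicator_of_mem hu]
        have h5 : (inner ℝ u w : ℝ) = u * w := by simp [mul_comm]
        rw [h5, smul_eq_mul, mul_left_comm, ← Complex.exp_add]
        congr 2
        push_cast
        ring
      · rw [hf, indicator_of_notMem hu, indicator_of_notMem hu, smul_zero]
    rw [hrw, integral_indicator measurableSet_Ioi]
    have hbre : 0 < (b₀ + 2 * π * w * Complex.I).re := by
      simp [hb₀]
      exact hc
    rw [aux_integral hbre m, hm1]
    have hbeq : b₀ + 2 * π * w * Complex.I = -Complex.I * (c - 2 * π * w) := by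
      rw [hb₀]; ring
    rw [hbeq, mul_pow, ← hm1]
    have hIpow : (-Complex.I) ^ (m + 1) * ((-Complex.I) ^ (m+1))⁻¹ = 1 := by
      apply mul_inv_cancel₀
      apply pow_ne_zero
      simp [Complex.I_ne_zero]
    have hI2 : ((-Complex.I) : ℂ) ^ 2 = -1 := by
      rw [sq, neg_mul_neg, Complex.I_mul_I]
    have h2 : ((-Complex.I) ^ (m + 1))⁻¹ = (-1 : ℂ) ^ k := by
      rw [hm1, pow_mul, hI2, ← inv_pow, inv_neg, inv_one]
    rw [div_eq_mul_inv, mul_inv, h2]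
  -- f is integrable
  have hIf : Integrable f := by
    rw [hf]
    exact (integrable_indicator_iff measurableSet_Ioi).mpr (aux_integrable hb₀re m)
  -- 𝓕 f is integrable
  have hIFf : Integrable (𝓕 f) := by
    refine Integrable.congr ?_ (Filter.Eventually.of_forall fun w => (hFf w).symm)
    exact ((expl_integrable hc hk).const_mul _).const_mul _
  -- f is continuous at v
  have hcf : ContinuousAt f v := by
    have hev : (fun u : ℝ => (u : ℂ) ^ m * Complex.exp (-(b₀ * u))) =ᶠ[nhds v] f := by
      filter_upwards [Ioi_mem_nhds hv] with u hu
      rw [hf, indicator_of_mem hu]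
    refine ContinuousAt.congr ?_ hev
    fun_prop
  have hinv := hIf.fourierInv_fourier_eq hIFf hcf
  rw [Real.fourierInv_eq] at hinv
  have hfv : f v = (v : ℂ) ^ m * Complex.exp (Complex.I * c * v) := by
    rw [hf, indicator_of_mem (mem_Ioi.mpr hv)]
    congr 1
    congr 1
    rw [hb₀]; ring
  -- rewrite the inversion integral
  have hinv2 : ((m.factorial : ℂ) * (-1 : ℂ) ^ k) *
      ∫ w : ℝ, (fun s : ℝ => Complex.exp (Complex.I * v * s) * ((c - s) ^ (2 * k))⁻¹)
        (2 * π * w) = f v := by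
    rw [← hinv, ← MeasureTheory.integral_const_mul]
    congr 1
    funext w
    rw [Circle.smul_def, Real.fourierChar_apply, smul_eq_mul, hFf w]
    have h5 : (inner ℝ w v : ℝ) = w * v := by simp [mul_comm]
    rw [h5]
    simp only
    have he : ((2 * π * (w * v) : ℝ) : ℂ) * Complex.I
        = Complex.I * v * ((2 * π * w : ℝ) : ℂ) := by
      push_cast
      ring
    rw [he]
    push_cast
    ring
  rw [Measure.integral_comp_mul_left
    (fun s : ℝ => Complex.exp (Complex.I * v * s) * ((c - s) ^ (2 * k))⁻¹) (2 * π)] at hinv2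
  rw [hfv] at hinv2
  replace hinv := hinv2
  have hπ : 0 < 2 * π := by have := Real.pi_pos; linarith
  rw [_root_.abs_of_pos (inv_pos.mpr hπ), real_smul] at hinv
  push_cast at hinv
  set ε : ℂ := (-1 : ℂ) ^ k with hε
  have hε2 : ε * ε = 1 := by
    rw [hε, ← pow_add, ← two_mul, pow_mul]
    norm_num
  have hfac : (m.factorial : ℂ) ≠ 0 := by exact_mod_cast m.factorial_ne_zero
  have hπc : (2 : ℂ) * π ≠ 0 := by
    simpa using ofReal_ne_zero.mpr hπ.ne'
  set S : ℂ := ∫ s : ℝ, Complex.exp (Complex.I * v * s) * ((c - s) ^ (2 * k))⁻¹ with hS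
  field_simp at hinv ⊢
  linear_combination ε * hinv - S * (m.factorial : ℂ) * hε2

/-- integral of the weight-`2k` coherent states along the horizontal
lift of the horocycle `γ(t) = iλ + t`:
`∫ℝ e^{ikt/λ}(z + iλ − t)^{−2k} dt = (2π(−1)^k/(2k−1)!) (k/λ)^{2k−1} e^{−k} e^{ikz/λ}`. -/
theorem stmt12 (k : ℕ) (hk : 1 ≤ k) (lam : ℝ) (hlam : 0 < lam) (z : ℂ) (hz : 0 < z.im) :
    ∫ t : ℝ, Complex.exp (Complex.I * k * t / lam) *
        (z + Complex.I * lam - t) ^ (-(2 * (k : ℤ))) =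
      ((2 * Real.pi * (-1 : ℝ) ^ k / (Nat.factorial (2 * k - 1)) : ℝ) : ℂ) *
        (((k : ℝ) / lam : ℝ) : ℂ) ^ (2 * k - 1) *
        (Real.exp (-(k : ℝ)) : ℂ) * Complex.exp (Complex.I * k * z / lam) := by
  have hlam' : (lam : ℂ) ≠ 0 := Complex.ofReal_ne_zero.mpr hlam.ne'
  set c : ℂ := z + Complex.I * lam with hc
  have hcim : 0 < c.im := by
    have : c.im = z.im + lam := by simp [hc]
    rw [this]; linarith
  set v : ℝ := k / lam with hv
  have hvpos : 0 < v := div_pos (by exact_mod_cast hk) hlam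
  have h := core hcim hk hvpos
  have hL : (∫ t : ℝ, Complex.exp (Complex.I * k * t / lam) *
      (z + Complex.I * lam - t) ^ (-(2 * (k : ℤ)))) =
      ∫ s : ℝ, Complex.exp (Complex.I * v * s) * ((c - s) ^ (2 * k))⁻¹ := by
    congr 1
    funext t
    have h1 : (z + Complex.I * lam - t) ^ (-(2 * (k : ℤ)))
        = ((c - t) ^ (2 * k))⁻¹ := by
      rw [hc, show -(2 * (k : ℤ)) = -((2 * k : ℕ) : ℤ) by push_cast; ring,
        zpow_neg, zpow_natCast]
    have h2 : Complex.I * k * t / lam = Complex.I * v * t := by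
      rw [hv]; push_cast; ring
    rw [h1, h2]
  rw [hL, h]
  have h3 : Complex.I * c * v = Complex.I * k * z / lam + -(k : ℂ) := by
    rw [hc, hv]
    push_cast
    field_simp
    linear_combination (k : ℂ) * (lam : ℂ) * Complex.I_sq
  rw [h3, Complex.exp_add, Complex.ofReal_exp]
  push_cast
  ring
end

section
/- Let k ≥ 1 and m ≥ 2k − 1 be integers and let a, b ∈ ℂ with |b| < |a|. Then the contour integral over the unit circle satisfies ∮_{|u|=1} u^m · (a·u + b)^{−2k} du = 2πi · C(m, 2k−1) · (−b)^{m−2k+1} · a^{−(m+1)}, where C(m, 2k−1) is the binomial coefficient. -/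
open MeasureTheory Metric Finset

lemma circleIntegral_finset_sum {ι : Type*} (s : Finset ι) (f : ι → ℂ → ℂ) (c : ℂ) (R : ℝ)
    (h : ∀ i ∈ s, CircleIntegrable (f i) c R) :
    circleIntegral (fun z => ∑ i ∈ s, f i z) c R = ∑ i ∈ s, circleIntegral (f i) c R := by
  simp only [circleIntegral]
  rw [← intervalIntegral.integral_finset_sum (fun i hi => (h i hi).out)]
  congr 1; funext θ; exact Finset.smul_sum

/-- residue computation for the circle states: for `k ≥ 1`,
`m ≥ 2k−1` and `|b| < |a|`,
`∮_{|u|=1} u^m (au+b)^{−2k} du = 2πi C(m,2k−1) (−b)^{m−2k+1} a^{−(m+1)}`. -/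
theorem stmt13 (k m : ℕ) (hk : 1 ≤ k) (hm : 2 * k - 1 ≤ m) (a b : ℂ)
    (hab : ‖b‖ < ‖a‖) :
    circleIntegral (fun u : ℂ => u ^ m * (a * u + b) ^ (-(2 * (k : ℤ)))) 0 1 =
      2 * (Real.pi : ℂ) * Complex.I * (Nat.choose m (2 * k - 1) : ℂ) *
        (-b) ^ (m - (2 * k - 1)) * a ^ (-((m : ℤ) + 1)) := by
  have ha : a ≠ 0 := by
    intro h; rw [h] at hab; simp at hab
    exact absurd hab (not_lt.2 (norm_nonneg b))
  set w : ℂ := -b / a with hw_def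
  have hwlt : ‖w‖ < 1 := by
    rw [hw_def, norm_div, norm_neg]
    rw [div_lt_one (norm_pos_iff.mpr ha)]
    exact hab
  have hwball : w ∈ ball (0 : ℂ) 1 := by simpa [Complex.dist_eq] using hwlt
  have hwsphere : w ∉ sphere (0 : ℂ) 1 := by
    simp only [mem_sphere_iff_norm, sub_zero]
    exact hwlt.ne
  -- rewrite integrand on the sphere
  have key : Set.EqOn (fun u : ℂ => u ^ m * (a * u + b) ^ (-(2 * (k : ℤ))))
      (fun u : ℂ => ∑ j ∈ Finset.range (m + 1),
        ((m.choose j : ℂ) * w ^ (m - j) * a ^ (-(2 * (k : ℤ)))) * (u - w) ^ ((j : ℤ) - 2 * k))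
      (sphere (0 : ℂ) 1) := by
    intro u hu
    have hune : u - w ≠ 0 := sub_ne_zero.2 (ne_of_mem_of_not_mem hu hwsphere)
    have hfac : a * u + b = a * (u - w) := by
      rw [hw_def, mul_sub, mul_div_assoc', mul_comm a (-b), mul_div_assoc, div_self ha]; ring
    simp only [hfac, mul_zpow]
    have hpow : u ^ m = ∑ j ∈ Finset.range (m + 1),
        (u - w) ^ j * w ^ (m - j) * (m.choose j : ℂ) := by
      have := add_pow (u - w) w m
      simpa using this
    rw [hpow, Finset.sum_mul]
    refine Finset.sum_congr rfl fun j hj => ?_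
    have he : (j : ℤ) - 2 * k = (j : ℤ) + (-(2 * (k : ℤ))) := by ring
    have : (u - w) ^ ((j : ℤ) - 2 * k) = (u - w) ^ j * (u - w) ^ (-(2 * (k : ℤ))) := by
      rw [he, zpow_add₀ hune, zpow_natCast]
    rw [this]; ring
  rw [circleIntegral.integral_congr zero_le_one key]
  have hint : ∀ j ∈ Finset.range (m + 1), CircleIntegrable
      (fun u : ℂ => ((m.choose j : ℂ) * w ^ (m - j) * a ^ (-(2 * (k : ℤ)))) *
        (u - w) ^ ((j : ℤ) - 2 * k)) 0 1 := by
    intro j _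
    have h1 : CircleIntegrable (fun u : ℂ => (u - w) ^ ((j : ℤ) - 2 * k)) 0 1 := by
      rw [circleIntegrable_sub_zpow_iff]
      right; right; simpa using hwsphere
    exact h1.const_mul _
  rw [circleIntegral_finset_sum _ _ _ _ hint]
  have hsum : ∀ j ∈ Finset.range (m + 1),
      circleIntegral (fun u : ℂ => ((m.choose j : ℂ) * w ^ (m - j) * a ^ (-(2 * (k : ℤ)))) *
        (u - w) ^ ((j : ℤ) - 2 * k)) 0 1 =
      ((m.choose j : ℂ) * w ^ (m - j) * a ^ (-(2 * (k : ℤ)))) *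
        circleIntegral (fun u : ℂ => (u - w) ^ ((j : ℤ) - 2 * k)) 0 1 :=
    fun j _ => circleIntegral.integral_const_mul _ _ _ _
  rw [Finset.sum_congr rfl hsum]
  have hzero : ∀ j ∈ Finset.range (m + 1), j ≠ 2 * k - 1 →
      ((m.choose j : ℂ) * w ^ (m - j) * a ^ (-(2 * (k : ℤ)))) *
        circleIntegral (fun u : ℂ => (u - w) ^ ((j : ℤ) - 2 * k)) 0 1 = 0 := by
    intro j _ hj
    have hne : (j : ℤ) - 2 * k ≠ -1 := by
      intro h
      apply hj
      omega
    rw [circleIntegral.integral_sub_zpow_of_ne hne, mul_zero]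
  rw [Finset.sum_eq_single_of_mem (2 * k - 1) (Finset.mem_range.2 (by omega)) hzero]
  have hexp : ((2 * k - 1 : ℕ) : ℤ) - 2 * k = -1 := by omega
  rw [hexp]
  have : circleIntegral (fun u : ℂ => (u - w) ^ (-1 : ℤ)) 0 1 = 2 * Real.pi * Complex.I := by
    have := circleIntegral.integral_sub_inv_of_mem_ball hwball
    simpa [zpow_neg_one] using this
  rw [this]
  -- final algebra
  have hane : a ^ (m - (2 * k - 1)) ≠ 0 := pow_ne_zero _ ha
  have hsplit : a ^ (-((m : ℤ) + 1)) =
      a ^ (-(2 * (k : ℤ))) * (a ^ (m - (2 * k - 1)))⁻¹ := by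
    rw [← zpow_natCast a (m - (2 * k - 1)), ← zpow_neg, ← zpow_add₀ ha]
    congr 1
    omega
  rw [hw_def, div_pow, hsplit]
  field_simp
end

section
/- Let τ ∈ ℝ and define g : ℝ → Matrix(2,2,ℝ) by g(t) = [[e^{t/2}, τ·e^{t/2}],[0, e^{−t/2}]] · [[cos(tτ/2), −sin(tτ/2)],[sin(tτ/2), cos(tτ/2)]]. Then for every t ∈ ℝ: (a) det g(t) = 1; (b) the matrix g(t)⁻¹ · g'(t) (where g' is the entrywise derivative) is symmetric and has trace 0; and (c) writing g(t) = [[a,b],[c,d]], one has (a·i + b)/(c·i + d) = e^t(τ + i) and (c·i + d)^{−2} = e^{t(1 − iτ)}. -/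
open Matrix

/-- the curve
`g(t) = [[e^{t/2}, τe^{t/2}],[0, e^{−t/2}]]·[[cos(tτ/2), −sin(tτ/2)],[sin(tτ/2), cos(tτ/2)]]`
has `det g(t) = 1`, `g(t)⁻¹g'(t)` symmetric and traceless (horizontality), and
`g(t)·(i,1) = (e^t(τ+i), e^{t(1−iτ)})` under the fractional-linear action. -/
theorem stmt14 (τ : ℝ) (g : ℝ → Matrix (Fin 2) (Fin 2) ℝ)
    (hg : ∀ t : ℝ, g t =
      !![Real.exp (t / 2), τ * Real.exp (t / 2); 0, Real.exp (-t / 2)] *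
      !![Real.cos (t * τ / 2), -Real.sin (t * τ / 2);
         Real.sin (t * τ / 2), Real.cos (t * τ / 2)]) :
    ∀ t : ℝ,
      (g t).det = 1 ∧
      ((g t)⁻¹ * Matrix.of fun i j => deriv (fun s => g s i j) t).IsSymm ∧
      Matrix.trace ((g t)⁻¹ * Matrix.of fun i j => deriv (fun s => g s i j) t) = 0 ∧
      (((g t 0 0 : ℝ) : ℂ) * Complex.I + ((g t 0 1 : ℝ) : ℂ)) /
          (((g t 1 0 : ℝ) : ℂ) * Complex.I + ((g t 1 1 : ℝ) : ℂ))
        = Real.exp t * ((τ : ℂ) + Complex.I) ∧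
      (((g t 1 0 : ℝ) : ℂ) * Complex.I + ((g t 1 1 : ℝ) : ℂ)) ^ (-2 : ℤ)
        = Complex.exp ((t : ℂ) * (1 - Complex.I * τ)) := by
  have hE0 : ∀ s : ℝ, g s = !![Real.exp (s/2) * Real.cos (s*τ/2) + τ * (Real.exp (s/2) * Real.sin (s*τ/2)),
      -(Real.exp (s/2) * Real.sin (s*τ/2)) + τ * (Real.exp (s/2) * Real.cos (s*τ/2));
      Real.exp (-s/2) * Real.sin (s*τ/2), Real.exp (-s/2) * Real.cos (s*τ/2)] := by
    intro s
    rw [hg s]; ext i j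
    fin_cases i <;> fin_cases j <;> simp [Matrix.mul_apply, Fin.sum_univ_two] <;> ring
  intro t
  have hpyth := Real.sin_sq_add_cos_sq (t*τ/2)
  have h1 : Real.exp (t/2) * Real.exp (-t/2) = 1 := by
    rw [← Real.exp_add, show t/2 + -t/2 = 0 by ring, Real.exp_zero]
  have h1' : Real.exp (t*(1/2)) * Real.exp (t*(-1/2)) = 1 := by
    rw [← Real.exp_add, show t*(1/2) + t*(-1/2) = 0 by ring, Real.exp_zero]
  have hp' : Real.sin (t*τ*(1/2))^2 + Real.cos (t*τ*(1/2))^2 = 1 := Real.sin_sq_add_cos_sq _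
  -- derivative helpers
  have hid : HasDerivAt (fun s : ℝ => s / 2) (1/2 : ℝ) t := by
    simpa using (hasDerivAt_id t).div_const 2
  have hEd : HasDerivAt (fun s : ℝ => Real.exp (s/2)) (Real.exp (t/2) * (1/2)) t :=
    HasDerivAt.comp (h₂ := Real.exp) t (Real.hasDerivAt_exp (t/2)) hid
  have hidn : HasDerivAt (fun s : ℝ => -s / 2) (-1/2 : ℝ) t := by
    simpa using ((hasDerivAt_id t).neg.div_const 2)
  have hFd : HasDerivAt (fun s : ℝ => Real.exp (-s/2)) (Real.exp (-t/2) * (-1/2)) t :=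
    HasDerivAt.comp (h₂ := Real.exp) t (Real.hasDerivAt_exp (-t/2)) hidn
  have hidc : HasDerivAt (fun s : ℝ => s * τ / 2) (τ / 2 : ℝ) t := by
    simpa using ((hasDerivAt_id t).mul_const τ).div_const 2
  have hCd : HasDerivAt (fun s : ℝ => Real.cos (s*τ/2)) (-Real.sin (t*τ/2) * (τ/2)) t :=
    HasDerivAt.comp (h₂ := Real.cos) t (Real.hasDerivAt_cos (t*τ/2)) hidc
  have hSd : HasDerivAt (fun s : ℝ => Real.sin (s*τ/2)) (Real.cos (t*τ/2) * (τ/2)) t :=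
    HasDerivAt.comp (h₂ := Real.sin) t (Real.hasDerivAt_sin (t*τ/2)) hidc
  have hD : (Matrix.of fun i j => deriv (fun s => g s i j) t) =
      !![(1+τ^2)/2 * (Real.exp (t/2) * Real.cos (t*τ/2)),
         -((1+τ^2)/2 * (Real.exp (t/2) * Real.sin (t*τ/2)));
         Real.exp (-t/2)/2 * (τ * Real.cos (t*τ/2) - Real.sin (t*τ/2)),
         -(Real.exp (-t/2)/2 * (Real.cos (t*τ/2) + τ * Real.sin (t*τ/2)))] := by
    have e00 : (fun s => g s 0 0) = fun s => Real.exp (s/2) * Real.cos (s*τ/2) + τ * (Real.exp (s/2) * Real.sin (s*τ/2)) := by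
      funext s; rw [hE0 s]; simp
    have e01 : (fun s => g s 0 1) = fun s => -(Real.exp (s/2) * Real.sin (s*τ/2)) + τ * (Real.exp (s/2) * Real.cos (s*τ/2)) := by
      funext s; rw [hE0 s]; simp
    have e10 : (fun s => g s 1 0) = fun s => Real.exp (-s/2) * Real.sin (s*τ/2) := by
      funext s; rw [hE0 s]; simp
    have e11 : (fun s => g s 1 1) = fun s => Real.exp (-s/2) * Real.cos (s*τ/2) := by
      funext s; rw [hE0 s]; simp
    ext i j
    fin_cases i <;> fin_cases j
    · show deriv (fun s => g s 0 0) t = (1+τ^2)/2 * (Real.exp (t/2) * Real.cos (t*τ/2))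
      rw [e00]; exact (((hEd.mul hCd).add ((hEd.mul hSd).const_mul τ)).deriv).trans (by ring)
    · show deriv (fun s => g s 0 1) t = -((1+τ^2)/2 * (Real.exp (t/2) * Real.sin (t*τ/2)))
      rw [e01]; exact ((((hEd.mul hSd).neg).add ((hEd.mul hCd).const_mul τ)).deriv).trans (by ring)
    · show deriv (fun s => g s 1 0) t = Real.exp (-t/2)/2 * (τ * Real.cos (t*τ/2) - Real.sin (t*τ/2))
      rw [e10]; exact ((hFd.mul hSd).deriv).trans (by ring)
    · show deriv (fun s => g s 1 1) t = -(Real.exp (-t/2)/2 * (Real.cos (t*τ/2) + τ * Real.sin (t*τ/2)))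
      rw [e11]; exact ((hFd.mul hCd).deriv).trans (by ring)
  have hdet : (g t).det = 1 := by
    rw [hE0 t, Matrix.det_fin_two_of]
    linear_combination Real.exp (t/2) * Real.exp (-t/2) * hpyth + h1
  have hinv : (g t)⁻¹ = !![Real.exp (-t/2) * Real.cos (t*τ/2),
      -(-(Real.exp (t/2) * Real.sin (t*τ/2)) + τ * (Real.exp (t/2) * Real.cos (t*τ/2)));
      -(Real.exp (-t/2) * Real.sin (t*τ/2)),
      Real.exp (t/2) * Real.cos (t*τ/2) + τ * (Real.exp (t/2) * Real.sin (t*τ/2))] := by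
    apply Matrix.inv_eq_right_inv
    rw [hE0 t]
    ext i j
    fin_cases i <;> fin_cases j <;>
      simp [Matrix.mul_apply, Fin.sum_univ_two, Matrix.one_apply] <;>
      first
        | linear_combination Real.exp (t/2) * Real.exp (-t/2) * hpyth + h1
        | ring
  refine ⟨hdet, ?_, ?_, ?_, ?_⟩
  · rw [hinv, hD, Matrix.IsSymm]
    ext i j
    fin_cases i <;> fin_cases j <;>
      simp [Matrix.mul_apply, Fin.sum_univ_two, Matrix.transpose_apply] <;> ring
  · rw [hinv, hD, Matrix.trace_fin_two]
    simp [Matrix.mul_apply, Fin.sum_univ_two]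
    ring
  · have ha : g t 0 0 = Real.exp (t/2) * Real.cos (t*τ/2) + τ * (Real.exp (t/2) * Real.sin (t*τ/2)) := by
      rw [hE0 t]; simp
    have hb : g t 0 1 = -(Real.exp (t/2) * Real.sin (t*τ/2)) + τ * (Real.exp (t/2) * Real.cos (t*τ/2)) := by
      rw [hE0 t]; simp
    have hc : g t 1 0 = Real.exp (-t/2) * Real.sin (t*τ/2) := by rw [hE0 t]; simp
    have hd : g t 1 1 = Real.exp (-t/2) * Real.cos (t*τ/2) := by rw [hE0 t]; simp
    have hnumexp : ((g t 0 0 : ℝ) : ℂ) * Complex.I + ((g t 0 1 : ℝ) : ℂ)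
        = Complex.exp (↑(t/2) + ↑(t*τ/2) * Complex.I) * ((τ:ℂ) + Complex.I) := by
      rw [ha, hb, Complex.exp_add, Complex.exp_mul_I, ← Complex.ofReal_cos,
        ← Complex.ofReal_sin, ← Complex.ofReal_exp]
      push_cast
      linear_combination (-(Complex.exp ((t:ℂ)/2) * Complex.sin ((t:ℂ)*(τ:ℂ)/2))) * Complex.I_sq
    have hdenexp : ((g t 1 0 : ℝ) : ℂ) * Complex.I + ((g t 1 1 : ℝ) : ℂ)
        = Complex.exp (↑(-t/2) + ↑(t*τ/2) * Complex.I) := by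
      rw [hc, hd, Complex.exp_add, Complex.exp_mul_I, ← Complex.ofReal_cos,
        ← Complex.ofReal_sin, ← Complex.ofReal_exp]
      push_cast; ring
    rw [hnumexp, hdenexp, Complex.ofReal_exp, div_eq_iff (Complex.exp_ne_zero _)]
    have hsplit : Complex.exp (t:ℂ) * Complex.exp (↑(-t/2) + ↑(t*τ/2) * Complex.I)
        = Complex.exp (↑(t/2) + ↑(t*τ/2) * Complex.I) := by
      rw [← Complex.exp_add]; congr 1; push_cast; ring
    linear_combination (-((τ:ℂ) + Complex.I)) * hsplit
  · have hc : g t 1 0 = Real.exp (-t/2) * Real.sin (t*τ/2) := by rw [hE0 t]; simp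
    have hd : g t 1 1 = Real.exp (-t/2) * Real.cos (t*τ/2) := by rw [hE0 t]; simp
    have hdenexp : ((g t 1 0 : ℝ) : ℂ) * Complex.I + ((g t 1 1 : ℝ) : ℂ)
        = Complex.exp (↑(-t/2) + ↑(t*τ/2) * Complex.I) := by
      rw [hc, hd, Complex.exp_add, Complex.exp_mul_I, ← Complex.ofReal_cos,
        ← Complex.ofReal_sin, ← Complex.ofReal_exp]
      push_cast; ring
    rw [hdenexp, ← Complex.exp_int_mul]
    congr 1
    push_cast; ring
end

section
/- Let λ > 0 and define g : ℝ → Matrix(2,2,ℝ) by g(t) = [[1, t],[0, 1]] · [[λ^{1/2}, 0],[0, λ^{−1/2}]] · [[cos(t/(2λ)), −sin(t/(2λ))],[sin(t/(2λ)), cos(t/(2λ))]]. Then for every t ∈ ℝ: (a) det g(t) = 1; (b) the matrix g(t)⁻¹ · g'(t) is symmetric and has trace 0; and (c) writing g(t) = [[a,b],[c,d]], one has (a·i + b)/(c·i + d) = iλ + t and (c·i + d)^{−2} = λ·e^{−it/λ}. -/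
set_option maxHeartbeats 1000000


open Matrix

/-- the curve
`g(t) = [[1,t],[0,1]]·[[λ^{1/2},0],[0,λ^{−1/2}]]·[[cos(t/2λ), −sin(t/2λ)],[sin(t/2λ), cos(t/2λ)]]`
has `det g(t) = 1`, `g(t)⁻¹g'(t)` symmetric and traceless (horizontality), and
`g(t)·(i,1) = (iλ + t, λe^{−it/λ})` under the fractional-linear action. -/
theorem stmt15 (lam : ℝ) (hlam : 0 < lam) (g : ℝ → Matrix (Fin 2) (Fin 2) ℝ)
    (hg : ∀ t : ℝ, g t =
      !![1, t; 0, 1] *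
      !![Real.sqrt lam, 0; 0, (Real.sqrt lam)⁻¹] *
      !![Real.cos (t / (2 * lam)), -Real.sin (t / (2 * lam));
         Real.sin (t / (2 * lam)), Real.cos (t / (2 * lam))]) :
    ∀ t : ℝ,
      (g t).det = 1 ∧
      ((g t)⁻¹ * Matrix.of fun i j => deriv (fun s => g s i j) t).IsSymm ∧
      Matrix.trace ((g t)⁻¹ * Matrix.of fun i j => deriv (fun s => g s i j) t) = 0 ∧
      (((g t 0 0 : ℝ) : ℂ) * Complex.I + ((g t 0 1 : ℝ) : ℂ)) /
          (((g t 1 0 : ℝ) : ℂ) * Complex.I + ((g t 1 1 : ℝ) : ℂ))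
        = Complex.I * lam + t ∧
      (((g t 1 0 : ℝ) : ℂ) * Complex.I + ((g t 1 1 : ℝ) : ℂ)) ^ (-2 : ℤ)
        = (lam : ℂ) * Complex.exp (-(Complex.I * t / lam)) := by
  intro t
  set sq := Real.sqrt lam with hsqdef
  have hsq0 : 0 < sq := Real.sqrt_pos.mpr hlam
  have hsq2 : sq ^ 2 = lam := Real.sq_sqrt hlam.le
  have hsqne : sq ≠ 0 := hsq0.ne'
  have pyth : Real.sin (t/(2*lam)) ^ 2 + Real.cos (t/(2*lam)) ^ 2 = 1 :=
    Real.sin_sq_add_cos_sq _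
  have hG : ∀ s : ℝ, g s =
      !![sq * Real.cos (s/(2*lam)) + s * sq⁻¹ * Real.sin (s/(2*lam)),
         -(sq * Real.sin (s/(2*lam))) + s * sq⁻¹ * Real.cos (s/(2*lam));
         sq⁻¹ * Real.sin (s/(2*lam)), sq⁻¹ * Real.cos (s/(2*lam))] := by
    intro s
    rw [hg]
    ext i j
    fin_cases i <;> fin_cases j <;> simp [Matrix.mul_fin_two]
  -- determinant
  have hdet : (g t).det = 1 := by
    rw [hG, Matrix.det_fin_two_of]
    field_simp
    nlinarith [pyth, hsq2]
  -- derivatives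
  have hdiv : HasDerivAt (fun s : ℝ => s / (2 * lam)) (1/(2*lam)) t := by
    simpa using (hasDerivAt_id t).div_const (2*lam)
  have hc : HasDerivAt (fun s : ℝ => Real.cos (s/(2*lam)))
      (-Real.sin (t/(2*lam)) * (1/(2*lam))) t :=
    (Real.hasDerivAt_cos _).comp t hdiv
  have hs : HasDerivAt (fun s : ℝ => Real.sin (s/(2*lam)))
      (Real.cos (t/(2*lam)) * (1/(2*lam))) t :=
    (Real.hasDerivAt_sin _).comp t hdiv
  have h00 : HasDerivAt (fun s : ℝ => sq * Real.cos (s/(2*lam)) + s * sq⁻¹ * Real.sin (s/(2*lam)))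
      (sq * (-Real.sin (t/(2*lam)) * (1/(2*lam))) +
        (1 * sq⁻¹ * Real.sin (t/(2*lam)) + t * sq⁻¹ * (Real.cos (t/(2*lam)) * (1/(2*lam))))) t :=
    (hc.const_mul sq).add (((hasDerivAt_id t).mul_const sq⁻¹).mul hs)
  have h01 : HasDerivAt (fun s : ℝ => -(sq * Real.sin (s/(2*lam))) + s * sq⁻¹ * Real.cos (s/(2*lam)))
      (-(sq * (Real.cos (t/(2*lam)) * (1/(2*lam)))) +
        (1 * sq⁻¹ * Real.cos (t/(2*lam)) + t * sq⁻¹ * (-Real.sin (t/(2*lam)) * (1/(2*lam))))) t :=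
    ((hs.const_mul sq).neg).add (((hasDerivAt_id t).mul_const sq⁻¹).mul hc)
  have h10 : HasDerivAt (fun s : ℝ => sq⁻¹ * Real.sin (s/(2*lam)))
      (sq⁻¹ * (Real.cos (t/(2*lam)) * (1/(2*lam)))) t := hs.const_mul sq⁻¹
  have h11 : HasDerivAt (fun s : ℝ => sq⁻¹ * Real.cos (s/(2*lam)))
      (sq⁻¹ * (-Real.sin (t/(2*lam)) * (1/(2*lam)))) t := hc.const_mul sq⁻¹
  have e00 : (fun s => g s 0 0) = fun s : ℝ =>
      sq * Real.cos (s/(2*lam)) + s * sq⁻¹ * Real.sin (s/(2*lam)) := by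
    funext s; rw [hG s]; simp
  have e01 : (fun s => g s 0 1) = fun s : ℝ =>
      -(sq * Real.sin (s/(2*lam))) + s * sq⁻¹ * Real.cos (s/(2*lam)) := by
    funext s; rw [hG s]; simp
  have e10 : (fun s => g s 1 0) = fun s : ℝ => sq⁻¹ * Real.sin (s/(2*lam)) := by
    funext s; rw [hG s]; simp
  have e11 : (fun s => g s 1 1) = fun s : ℝ => sq⁻¹ * Real.cos (s/(2*lam)) := by
    funext s; rw [hG s]; simp
  have d00 : deriv (fun s => g s 0 0) t =
      sq * (-Real.sin (t/(2*lam)) * (1/(2*lam))) +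
        (1 * sq⁻¹ * Real.sin (t/(2*lam)) + t * sq⁻¹ * (Real.cos (t/(2*lam)) * (1/(2*lam)))) := by
    rw [e00]; exact h00.deriv
  have d01 : deriv (fun s => g s 0 1) t =
      -(sq * (Real.cos (t/(2*lam)) * (1/(2*lam)))) +
        (1 * sq⁻¹ * Real.cos (t/(2*lam)) + t * sq⁻¹ * (-Real.sin (t/(2*lam)) * (1/(2*lam)))) := by
    rw [e01]; exact h01.deriv
  have d10 : deriv (fun s => g s 1 0) t =
      sq⁻¹ * (Real.cos (t/(2*lam)) * (1/(2*lam))) := by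
    rw [e10]; exact h10.deriv
  have d11 : deriv (fun s => g s 1 1) t =
      sq⁻¹ * (-Real.sin (t/(2*lam)) * (1/(2*lam))) := by
    rw [e11]; exact h11.deriv
  have hderiv : (Matrix.of fun i j => deriv (fun s => g s i j) t) =
      !![sq * (-Real.sin (t/(2*lam)) * (1/(2*lam))) +
          (1 * sq⁻¹ * Real.sin (t/(2*lam)) + t * sq⁻¹ * (Real.cos (t/(2*lam)) * (1/(2*lam)))),
        -(sq * (Real.cos (t/(2*lam)) * (1/(2*lam)))) +
          (1 * sq⁻¹ * Real.cos (t/(2*lam)) + t * sq⁻¹ * (-Real.sin (t/(2*lam)) * (1/(2*lam))));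
        sq⁻¹ * (Real.cos (t/(2*lam)) * (1/(2*lam))),
        sq⁻¹ * (-Real.sin (t/(2*lam)) * (1/(2*lam)))] := by
    ext i j
    fin_cases i <;> fin_cases j
    · simpa using d00
    · simpa using d01
    · simpa using d10
    · simpa using d11
  -- inverse
  have hinv : (g t)⁻¹ =
      !![sq⁻¹ * Real.cos (t/(2*lam)),
         -(-(sq * Real.sin (t/(2*lam))) + t * sq⁻¹ * Real.cos (t/(2*lam)));
         -(sq⁻¹ * Real.sin (t/(2*lam))),
         sq * Real.cos (t/(2*lam)) + t * sq⁻¹ * Real.sin (t/(2*lam))] := by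
    rw [Matrix.inv_def, hdet, hG t, Matrix.adjugate_fin_two_of]
    simp
  have hMval : (g t)⁻¹ * (Matrix.of fun i j => deriv (fun s => g s i j) t) =
      !![Real.sin (t/(2*lam)) * Real.cos (t/(2*lam)) / lam,
         (Real.cos (t/(2*lam)) ^ 2 - Real.sin (t/(2*lam)) ^ 2) / (2*lam);
         (Real.cos (t/(2*lam)) ^ 2 - Real.sin (t/(2*lam)) ^ 2) / (2*lam),
         -(Real.sin (t/(2*lam)) * Real.cos (t/(2*lam)) / lam)] := by
    rw [hinv, hderiv, Matrix.mul_fin_two]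
    ext i j
    fin_cases i <;> fin_cases j <;>
      · simp only [Matrix.cons_val_zero, Matrix.cons_val_one, Matrix.head_cons,
          Matrix.cons_val', Matrix.empty_val', Matrix.cons_val_fin_one, Matrix.head_fin_const,
          Fin.zero_eta, Fin.mk_one, Matrix.of_apply]
        simp only [← hsq2]
        field_simp
        ring
  refine ⟨hdet, ?_, ?_, ?_, ?_⟩
  · -- symmetry
    rw [Matrix.IsSymm, hMval]
    ext i j
    fin_cases i <;> fin_cases j <;> simp [Matrix.transpose_apply]
  · -- trace
    rw [hMval, Matrix.trace_fin_two]
    simp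
  · -- Möbius
    have hnum : ((g t 0 0 : ℝ) : ℂ) * Complex.I + ((g t 0 1 : ℝ) : ℂ) =
        ((sq : ℂ) * Complex.I + (t : ℂ) * (sq : ℂ)⁻¹) *
          Complex.exp ((t/(2*lam) : ℝ) * Complex.I) := by
      rw [hG, Complex.exp_mul_I]
      push_cast
      simp [Matrix.cons_val_zero, Matrix.cons_val_one]
      ring_nf
      try simp [Complex.I_sq]
      try ring_nf
    have hden : ((g t 1 0 : ℝ) : ℂ) * Complex.I + ((g t 1 1 : ℝ) : ℂ) =
        (sq : ℂ)⁻¹ * Complex.exp ((t/(2*lam) : ℝ) * Complex.I) := by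
      rw [hG, Complex.exp_mul_I]
      push_cast
      simp [Matrix.cons_val_zero, Matrix.cons_val_one]
      ring_nf
      try simp [Complex.I_sq]
      try ring_nf
    rw [hnum, hden, mul_div_mul_right _ _ (Complex.exp_ne_zero _)]
    have hz : (sq : ℂ) ≠ 0 := by exact_mod_cast hsqne
    have hsq2c : (sq : ℂ) ^ 2 = (lam : ℂ) := by exact_mod_cast hsq2
    field_simp
    linear_combination Complex.I * hsq2c
  · -- cocycle
    have hden : ((g t 1 0 : ℝ) : ℂ) * Complex.I + ((g t 1 1 : ℝ) : ℂ) =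
        (sq : ℂ)⁻¹ * Complex.exp ((t/(2*lam) : ℝ) * Complex.I) := by
      rw [hG, Complex.exp_mul_I]
      push_cast
      simp [Matrix.cons_val_zero, Matrix.cons_val_one]
      ring_nf
      try simp [Complex.I_sq]
      try ring_nf
    rw [hden]
    have hz : (sq : ℂ) ≠ 0 := by exact_mod_cast hsqne
    have hsq2c : (sq : ℂ) ^ 2 = (lam : ℂ) := by exact_mod_cast hsq2
    have hlamc : (lam : ℂ) ≠ 0 := by exact_mod_cast hlam.ne'
    have key : ((sq : ℂ)⁻¹ * Complex.exp ((t/(2*lam) : ℝ) * Complex.I)) ^ 2 *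
        ((lam : ℂ) * Complex.exp (-(Complex.I * t / lam))) = 1 := by
      rw [mul_pow, ← Complex.exp_nat_mul]
      rw [show ((2 : ℕ) : ℂ) * (((t/(2*lam) : ℝ) : ℂ) * Complex.I) = Complex.I * t / lam by
        push_cast; field_simp]
      rw [mul_mul_mul_comm, ← Complex.exp_add, add_neg_cancel, Complex.exp_zero, mul_one]
      field_simp [hsq2c]
      exact hsq2c.symm
    have h2 : ∀ X : ℂ, X ^ (-2 : ℤ) = (X ^ (2 : ℕ))⁻¹ := by
      intro X
      rw [show (-2 : ℤ) = -(2 : ℕ) by norm_num, _root_.zpow_neg, zpow_natCast]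
    rw [h2]
    exact inv_eq_of_mul_eq_one_right key
end

section
/- Let μ > 0, a ≠ 0, and b be real numbers, and define g : ℝ → Matrix(2,2,ℝ) by g(t) = [[cos(at), sin(at)],[−sin(at), cos(at)]] · [[e^{−μ/2}, 0],[0, e^{μ/2}]] · [[cos(bt/2), −sin(bt/2)],[sin(bt/2), cos(bt/2)]]. Then g(t)⁻¹ · g'(t) is a symmetric matrix for all t ∈ ℝ if and only if b = 2a·cosh μ; and in that case g(t)⁻¹·g'(t) also has trace 0 for all t. -/
open Matrix

/-- the curve
`g(t) = [[cos at, sin at],[−sin at, cos at]]·[[e^{−μ/2},0],[0,e^{μ/2}]]·[[cos bt/2, −sin bt/2],[sin bt/2, cos bt/2]]`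
over the hyperbolic circle of radius `μ` has `g(t)⁻¹g'(t)` symmetric for all `t`
iff `b = 2a cosh μ`, in which case `g(t)⁻¹g'(t)` is also traceless. -/
theorem stmt16 (μ a b : ℝ) (hμ : 0 < μ) (ha : a ≠ 0)
    (g : ℝ → Matrix (Fin 2) (Fin 2) ℝ)
    (hg : ∀ t : ℝ, g t =
      !![Real.cos (a * t), Real.sin (a * t); -Real.sin (a * t), Real.cos (a * t)] *
      !![Real.exp (-μ / 2), 0; 0, Real.exp (μ / 2)] *
      !![Real.cos (b * t / 2), -Real.sin (b * t / 2);
         Real.sin (b * t / 2), Real.cos (b * t / 2)]) :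
    ((∀ t : ℝ, ((g t)⁻¹ * Matrix.of fun i j => deriv (fun s => g s i j) t).IsSymm)
        ↔ b = 2 * a * Real.cosh μ) ∧
    (b = 2 * a * Real.cosh μ →
      ∀ t : ℝ, Matrix.trace ((g t)⁻¹ * Matrix.of fun i j => deriv (fun s => g s i j) t) = 0) := by
  have hE : Real.exp (-μ / 2) * Real.exp (μ / 2) = 1 := by
    rw [← Real.exp_add, show -μ / 2 + μ / 2 = 0 by ring, Real.exp_zero]
  have eCH : Real.cosh μ = (Real.exp (μ / 2) ^ 2 + Real.exp (-μ / 2) ^ 2) / 2 := by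
    rw [Real.cosh_eq]
    have e1 : Real.exp (μ / 2) ^ 2 = Real.exp μ := by
      rw [sq, ← Real.exp_add, show μ / 2 + μ / 2 = μ by ring]
    have e2 : Real.exp (-μ / 2) ^ 2 = Real.exp (-μ) := by
      rw [sq, ← Real.exp_add, show -μ / 2 + -μ / 2 = -μ by ring]
    rw [e1, e2]
  have eSH : Real.sinh μ = (Real.exp (μ / 2) ^ 2 - Real.exp (-μ / 2) ^ 2) / 2 := by
    rw [Real.sinh_eq]
    have e1 : Real.exp (μ / 2) ^ 2 = Real.exp μ := by
      rw [sq, ← Real.exp_add, show μ / 2 + μ / 2 = μ by ring]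
    have e2 : Real.exp (-μ / 2) ^ 2 = Real.exp (-μ) := by
      rw [sq, ← Real.exp_add, show -μ / 2 + -μ / 2 = -μ by ring]
    rw [e1, e2]
  have key : ∀ t : ℝ, (g t)⁻¹ * Matrix.of (fun i j => deriv (fun s => g s i j) t) =
      !![a * Real.sinh μ * (2 * Real.sin (b * t / 2) * Real.cos (b * t / 2)),
         (a * Real.cosh μ - b / 2) + a * Real.sinh μ * (Real.cos (b * t / 2) ^ 2 - Real.sin (b * t / 2) ^ 2);
         -(a * Real.cosh μ - b / 2) + a * Real.sinh μ * (Real.cos (b * t / 2) ^ 2 - Real.sin (b * t / 2) ^ 2),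
         -(a * Real.sinh μ * (2 * Real.sin (b * t / 2) * Real.cos (b * t / 2)))] := by
    intro t
    have h1 : Real.sin (a * t) ^ 2 + Real.cos (a * t) ^ 2 = 1 := Real.sin_sq_add_cos_sq _
    have h2 : Real.sin (b * t / 2) ^ 2 + Real.cos (b * t / 2) ^ 2 = 1 := Real.sin_sq_add_cos_sq _
    have hgt : g t = !![Real.cos (a * t) * Real.exp (-μ / 2) * Real.cos (b * t / 2) + Real.sin (a * t) * Real.exp (μ / 2) * Real.sin (b * t / 2), Real.cos (a * t) * Real.exp (-μ / 2) * (-Real.sin (b * t / 2)) + Real.sin (a * t) * Real.exp (μ / 2) * Real.cos (b * t / 2);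
        -Real.sin (a * t) * Real.exp (-μ / 2) * Real.cos (b * t / 2) + Real.cos (a * t) * Real.exp (μ / 2) * Real.sin (b * t / 2), Real.sin (a * t) * Real.exp (-μ / 2) * Real.sin (b * t / 2) + Real.cos (a * t) * Real.exp (μ / 2) * Real.cos (b * t / 2)] := by
      rw [hg t]
      ext i j
      fin_cases i <;> fin_cases j <;>
        (simp [Matrix.mul_apply, Fin.sum_univ_two]; try ring)
    have hinv : (g t)⁻¹ = !![Real.sin (a * t) * Real.exp (-μ / 2) * Real.sin (b * t / 2) + Real.cos (a * t) * Real.exp (μ / 2) * Real.cos (b * t / 2), -(Real.cos (a * t) * Real.exp (-μ / 2) * (-Real.sin (b * t / 2)) + Real.sin (a * t) * Real.exp (μ / 2) * Real.cos (b * t / 2));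
        -(-Real.sin (a * t) * Real.exp (-μ / 2) * Real.cos (b * t / 2) + Real.cos (a * t) * Real.exp (μ / 2) * Real.sin (b * t / 2)), Real.cos (a * t) * Real.exp (-μ / 2) * Real.cos (b * t / 2) + Real.sin (a * t) * Real.exp (μ / 2) * Real.sin (b * t / 2)] := by
      apply Matrix.inv_eq_left_inv
      rw [hgt]
      ext i j
      fin_cases i <;> fin_cases j <;>
        simp [Matrix.mul_apply, Fin.sum_univ_two, Matrix.one_apply]
      · linear_combination (Real.sin (b * t / 2) ^ 2 + Real.cos (b * t / 2) ^ 2) * h1 + h2 +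
          (Real.sin (a * t) ^ 2 * Real.sin (b * t / 2) ^ 2 + Real.sin (a * t) ^ 2 * Real.cos (b * t / 2) ^ 2 + Real.cos (a * t) ^ 2 * Real.sin (b * t / 2) ^ 2 + Real.cos (a * t) ^ 2 * Real.cos (b * t / 2) ^ 2) * hE
      · ring
      · ring
      · linear_combination (Real.sin (b * t / 2) ^ 2 + Real.cos (b * t / 2) ^ 2) * h1 + h2 +
          (Real.sin (a * t) ^ 2 * Real.sin (b * t / 2) ^ 2 + Real.sin (a * t) ^ 2 * Real.cos (b * t / 2) ^ 2 + Real.cos (a * t) ^ 2 * Real.sin (b * t / 2) ^ 2 + Real.cos (a * t) ^ 2 * Real.cos (b * t / 2) ^ 2) * hE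
    have hA : HasDerivAt (fun s : ℝ => a * s) a t := by
      simpa using (hasDerivAt_id t).const_mul a
    have hB : HasDerivAt (fun s : ℝ => b * s / 2) (b / 2) t := by
      simpa using ((hasDerivAt_id t).const_mul b).div_const 2
    have hc1 := hA.cos
    have hs1 := hA.sin
    have hc2 := hB.cos
    have hs2 := hB.sin
    have f00 : (fun s => g s 0 0) = fun s => Real.cos (a * s) * Real.exp (-μ / 2) * Real.cos (b * s / 2) + Real.sin (a * s) * Real.exp (μ / 2) * Real.sin (b * s / 2) := by
      funext s; rw [hg s]; simp [Matrix.mul_apply, Fin.sum_univ_two]; try ring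
    have f01 : (fun s => g s 0 1) = fun s => Real.cos (a * s) * Real.exp (-μ / 2) * (-Real.sin (b * s / 2)) + Real.sin (a * s) * Real.exp (μ / 2) * Real.cos (b * s / 2) := by
      funext s; rw [hg s]; simp [Matrix.mul_apply, Fin.sum_univ_two]; try ring
    have f10 : (fun s => g s 1 0) = fun s => -Real.sin (a * s) * Real.exp (-μ / 2) * Real.cos (b * s / 2) + Real.cos (a * s) * Real.exp (μ / 2) * Real.sin (b * s / 2) := by
      funext s; rw [hg s]; simp [Matrix.mul_apply, Fin.sum_univ_two]; try ring
    have f11 : (fun s => g s 1 1) = fun s => Real.sin (a * s) * Real.exp (-μ / 2) * Real.sin (b * s / 2) + Real.cos (a * s) * Real.exp (μ / 2) * Real.cos (b * s / 2) := by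
      funext s; rw [hg s]; simp [Matrix.mul_apply, Fin.sum_univ_two]; try ring
    have d00 : deriv (fun s => g s 0 0) t = -(a * Real.sin (a * t)) * Real.exp (-μ / 2) * Real.cos (b * t / 2) - b / 2 * Real.cos (a * t) * Real.exp (-μ / 2) * Real.sin (b * t / 2) + a * Real.cos (a * t) * Real.exp (μ / 2) * Real.sin (b * t / 2) + b / 2 * Real.sin (a * t) * Real.exp (μ / 2) * Real.cos (b * t / 2) := by
      rw [f00]
      exact ((((hc1.mul_const _).mul hc2).add ((hs1.mul_const _).mul hs2)).deriv).trans (by ring)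
    have d01 : deriv (fun s => g s 0 1) t = a * Real.sin (a * t) * Real.exp (-μ / 2) * Real.sin (b * t / 2) - b / 2 * Real.cos (a * t) * Real.exp (-μ / 2) * Real.cos (b * t / 2) + a * Real.cos (a * t) * Real.exp (μ / 2) * Real.cos (b * t / 2) - b / 2 * Real.sin (a * t) * Real.exp (μ / 2) * Real.sin (b * t / 2) := by
      rw [f01]
      exact ((((hc1.mul_const _).mul hs2.neg).add ((hs1.mul_const _).mul hc2)).deriv).trans (by simp only [Pi.neg_apply]; ring)
    have d10 : deriv (fun s => g s 1 0) t = -(a * Real.cos (a * t)) * Real.exp (-μ / 2) * Real.cos (b * t / 2) + b / 2 * Real.sin (a * t) * Real.exp (-μ / 2) * Real.sin (b * t / 2) - a * Real.sin (a * t) * Real.exp (μ / 2) * Real.sin (b * t / 2) + b / 2 * Real.cos (a * t) * Real.exp (μ / 2) * Real.cos (b * t / 2) := by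
      rw [f10]
      exact ((((hs1.neg.mul_const _).mul hc2).add ((hc1.mul_const _).mul hs2)).deriv).trans (by simp only [Pi.neg_apply]; ring)
    have d11 : deriv (fun s => g s 1 1) t = a * Real.cos (a * t) * Real.exp (-μ / 2) * Real.sin (b * t / 2) + b / 2 * Real.sin (a * t) * Real.exp (-μ / 2) * Real.cos (b * t / 2) - a * Real.sin (a * t) * Real.exp (μ / 2) * Real.cos (b * t / 2) - b / 2 * Real.cos (a * t) * Real.exp (μ / 2) * Real.sin (b * t / 2) := by
      rw [f11]
      exact ((((hs1.mul_const _).mul hs2).add ((hc1.mul_const _).mul hc2)).deriv).trans (by ring)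
    have hder : (Matrix.of fun i j => deriv (fun s => g s i j) t) =
        !![-(a * Real.sin (a * t)) * Real.exp (-μ / 2) * Real.cos (b * t / 2) - b / 2 * Real.cos (a * t) * Real.exp (-μ / 2) * Real.sin (b * t / 2) + a * Real.cos (a * t) * Real.exp (μ / 2) * Real.sin (b * t / 2) + b / 2 * Real.sin (a * t) * Real.exp (μ / 2) * Real.cos (b * t / 2),
           a * Real.sin (a * t) * Real.exp (-μ / 2) * Real.sin (b * t / 2) - b / 2 * Real.cos (a * t) * Real.exp (-μ / 2) * Real.cos (b * t / 2) + a * Real.cos (a * t) * Real.exp (μ / 2) * Real.cos (b * t / 2) - b / 2 * Real.sin (a * t) * Real.exp (μ / 2) * Real.sin (b * t / 2);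
           -(a * Real.cos (a * t)) * Real.exp (-μ / 2) * Real.cos (b * t / 2) + b / 2 * Real.sin (a * t) * Real.exp (-μ / 2) * Real.sin (b * t / 2) - a * Real.sin (a * t) * Real.exp (μ / 2) * Real.sin (b * t / 2) + b / 2 * Real.cos (a * t) * Real.exp (μ / 2) * Real.cos (b * t / 2),
           a * Real.cos (a * t) * Real.exp (-μ / 2) * Real.sin (b * t / 2) + b / 2 * Real.sin (a * t) * Real.exp (-μ / 2) * Real.cos (b * t / 2) - a * Real.sin (a * t) * Real.exp (μ / 2) * Real.cos (b * t / 2) - b / 2 * Real.cos (a * t) * Real.exp (μ / 2) * Real.sin (b * t / 2)] := by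
      ext i j
      fin_cases i <;> fin_cases j
      · simpa using d00
      · simpa using d01
      · simpa using d10
      · simpa using d11
    rw [hinv, hder]
    ext i j
    fin_cases i <;> fin_cases j <;>
      simp [Matrix.mul_apply, Fin.sum_univ_two]
    · linear_combination (a * Real.cos (b * t / 2) * Real.sin (b * t / 2) * Real.exp (μ / 2) ^ 2 - a * Real.cos (b * t / 2) * Real.sin (b * t / 2) * Real.exp (-μ / 2) ^ 2) * h1 +
        (-(2 * a * Real.cos (b * t / 2) * Real.sin (b * t / 2))) * eSH
    · linear_combination (-(b / 2) * Real.sin (b * t / 2) ^ 2 - b / 2 * Real.cos (b * t / 2) ^ 2 + a * Real.sin (b * t / 2) ^ 2 * Real.exp (-μ / 2) ^ 2 + a * Real.cos (b * t / 2) ^ 2 * Real.exp (μ / 2) ^ 2) * h1 +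
        (-(b / 2) + a * Real.sinh μ + a * Real.exp (-μ / 2) ^ 2) * h2 +
        (-(b / 2) * (Real.sin (a * t) ^ 2 * Real.sin (b * t / 2) ^ 2 + Real.sin (a * t) ^ 2 * Real.cos (b * t / 2) ^ 2 + Real.cos (a * t) ^ 2 * Real.sin (b * t / 2) ^ 2 + Real.cos (a * t) ^ 2 * Real.cos (b * t / 2) ^ 2)) * hE +
        (-a) * eCH + (a - 2 * a * Real.cos (b * t / 2) ^ 2) * eSH
    · linear_combination (b / 2 * Real.sin (b * t / 2) ^ 2 + b / 2 * Real.cos (b * t / 2) ^ 2 - a * Real.sin (b * t / 2) ^ 2 * Real.exp (μ / 2) ^ 2 - a * Real.cos (b * t / 2) ^ 2 * Real.exp (-μ / 2) ^ 2) * h1 +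
        (b / 2 + a * Real.sinh μ - a * Real.exp (μ / 2) ^ 2) * h2 +
        (b / 2 * (Real.sin (a * t) ^ 2 * Real.sin (b * t / 2) ^ 2 + Real.sin (a * t) ^ 2 * Real.cos (b * t / 2) ^ 2 + Real.cos (a * t) ^ 2 * Real.sin (b * t / 2) ^ 2 + Real.cos (a * t) ^ 2 * Real.cos (b * t / 2) ^ 2)) * hE +
        a * eCH + (a - 2 * a * Real.cos (b * t / 2) ^ 2) * eSH
    · linear_combination (-(a * Real.cos (b * t / 2) * Real.sin (b * t / 2)) * Real.exp (μ / 2) ^ 2 + a * Real.cos (b * t / 2) * Real.sin (b * t / 2) * Real.exp (-μ / 2) ^ 2) * h1 +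
        (2 * a * Real.cos (b * t / 2) * Real.sin (b * t / 2)) * eSH
  constructor
  · constructor
    · intro h
      have h0 := (h 0)
      rw [key 0] at h0
      have h01 := h0.apply 0 1
      simp at h01
      nlinarith [h01]
    · intro hb t
      rw [key t]
      show _ᵀ = _
      ext i j
      fin_cases i <;> fin_cases j <;> simp <;> subst hb <;> ring
  · intro hb t
    rw [key t, Matrix.trace_fin_two_of]
    ring
end

section
/- Let Γ be a group, γ₀ ∈ Γ an element of infinite order, and Γ₀ = ⟨γ₀⟩ the cyclic subgroup it generates. Let T > 0 and let F : Γ × ℝ → ℂ be a function, measurable in the second variable, satisfying F(g·γ₀ⁿ, t) = F(g, t + nT) for all g ∈ Γ, n ∈ ℤ, t ∈ ℝ, and such that ∑_{g ∈ Γ} ∫_0^T |F(g,t)| dt < ∞. Then for each g ∈ Γ the integral ∫_{−∞}^{∞} F(g,t) dt converges and depends only on the left coset g·Γ₀, and ∑_{g ∈ Γ} ∫_0^T F(g,t) dt = ∑_{gΓ₀ ∈ Γ/Γ₀} ∫_{−∞}^{∞} F(g,t) dt, where the right-hand sum over cosets is absolutely convergent. -/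
set_option maxHeartbeats 1000000


open MeasureTheory Set

private lemma shift_Ioc {E : Type*} [NormedAddCommGroup E] [NormedSpace ℝ E]
    (φ : ℝ → E) (c T : ℝ) :
    ∫ t in Set.Ioc c (c + T), φ t = ∫ t in Set.Ioc (0:ℝ) T, φ (t + c) := by
  rw [← (measurePreserving_add_right volume c).setIntegral_preimage_emb
      (measurableEmbedding_addRight c)]
  congr 1
  rw [preimage_add_const_Ioc]
  simp

/-- the Rankin–Selberg unfolding identity.  For `γ₀ ∈ Γ` of infinite
order generating `Γ₀ = ⟨γ₀⟩`, `T > 0`, and `F : Γ × ℝ → ℂ` measurable in the second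
variable with `F(gγ₀ⁿ, t) = F(g, t + nT)` and `∑_g ∫₀ᵀ |F(g,t)| dt < ∞`, each
`∫ℝ F(g,t) dt` converges, depends only on the left coset `gΓ₀`, and
`∑_{g ∈ Γ} ∫₀ᵀ F(g,t) dt = ∑_{gΓ₀ ∈ Γ/Γ₀} ∫ℝ F(g,t) dt`, the coset sum being
absolutely convergent. -/
theorem stmt19 (Γ : Type*) [Group Γ] (γ₀ : Γ) (hγ₀ : ¬ IsOfFinOrder γ₀)
    (T : ℝ) (hT : 0 < T) (F : Γ × ℝ → ℂ)
    (hmeas : ∀ g : Γ, Measurable fun t : ℝ => F (g, t))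
    (hequiv : ∀ (g : Γ) (n : ℤ) (t : ℝ), F (g * γ₀ ^ n, t) = F (g, t + n * T))
    (hint : ∀ g : Γ, IntegrableOn (fun t : ℝ => F (g, t)) (Set.Ioc 0 T))
    (hsum : Summable fun g : Γ => ∫ t in Set.Ioc (0 : ℝ) T, ‖F (g, t)‖) :
    (∀ g : Γ, Integrable fun t : ℝ => F (g, t)) ∧
    (∀ g : Γ, ∀ γ ∈ Subgroup.zpowers γ₀,
      ∫ t : ℝ, F (g * γ, t) = ∫ t : ℝ, F (g, t)) ∧
    (Summable fun c : Γ ⧸ Subgroup.zpowers γ₀ => ‖∫ t : ℝ, F (Quotient.out c, t)‖) ∧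
    ∑' g : Γ, ∫ t in Set.Ioc (0 : ℝ) T, F (g, t)
      = ∑' c : Γ ⧸ Subgroup.zpowers γ₀, ∫ t : ℝ, F (Quotient.out c, t) := by
  classical
  have hinj : Function.Injective fun n : ℤ => γ₀ ^ n :=
    injective_zpow_iff_not_isOfFinOrder.mpr hγ₀
  set H := Subgroup.zpowers γ₀ with hHdef
  set S : ℤ → Set ℝ := fun n => Set.Ioc ((n : ℝ) * T) ((n : ℝ) * T + T) with hSdef
  have hS_eq : ∀ n : ℤ, S n = Set.Ioc ((n : ℤ) • T) (((n : ℤ) + 1) • T) := by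
    intro n
    rw [hSdef]
    simp only [add_zsmul, one_zsmul, zsmul_eq_mul, Int.cast_id]
    congr 1
    push_cast
    ring
  have hS_union : (⋃ n : ℤ, S n) = Set.univ := by
    simp only [hS_eq]
    exact iUnion_Ioc_zsmul hT
  have hS_disj : Pairwise (Function.onFun Disjoint S) := by
    have h := pairwise_disjoint_Ioc_zsmul (α := ℝ) T
    intro m n hmn
    rw [Function.onFun, hS_eq m, hS_eq n]
    exact h hmn
  have hpre : ∀ n : ℤ, (fun t : ℝ => t + (n : ℝ) * T) ⁻¹' S n = Set.Ioc (0:ℝ) T := by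
    intro n
    rw [hSdef]
    rw [preimage_add_const_Ioc]
    simp
  have hcomp : ∀ (g : Γ) (n : ℤ) (t : ℝ), F (g, t + (n : ℝ) * T) = F (g * γ₀ ^ n, t) :=
    fun g n t => (hequiv g n t).symm
  -- integrability on each S n
  have hIntOn : ∀ (g : Γ) (n : ℤ), IntegrableOn (fun t : ℝ => F (g, t)) (S n) := by
    intro g n
    have h0 : IntegrableOn ((fun t : ℝ => F (g, t)) ∘ (fun t : ℝ => t + (n : ℝ) * T))
        ((fun t : ℝ => t + (n : ℝ) * T) ⁻¹' (S n)) volume := by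
      rw [hpre n]
      have h1 : IntegrableOn (fun t : ℝ => F (g, t + (n : ℝ) * T)) (Set.Ioc (0:ℝ) T) := by
        simp only [hcomp]
        exact hint (g * γ₀ ^ n)
      exact h1
    exact ((measurePreserving_add_right volume ((n : ℝ) * T)).integrableOn_comp_preimage
      (measurableEmbedding_addRight ((n : ℝ) * T))).mp h0
  -- change of variables for values and norms
  have hval_eq : ∀ (g : Γ) (n : ℤ),
      ∫ t in S n, F (g, t) = ∫ t in Set.Ioc (0:ℝ) T, F (g * γ₀ ^ n, t) := by
    intro g n
    rw [hSdef]
    rw [shift_Ioc (fun t => F (g, t)) ((n : ℝ) * T) T]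
    simp only [hcomp]
  have hnorm_eq : ∀ (g : Γ) (n : ℤ),
      ∫ t in S n, ‖F (g, t)‖ = ∫ t in Set.Ioc (0:ℝ) T, ‖F (g * γ₀ ^ n, t)‖ := by
    intro g n
    rw [hSdef]
    rw [shift_Ioc (fun t => ‖F (g, t)‖) ((n : ℝ) * T) T]
    simp only [hcomp]
  -- per-g summability of norms over translates
  have hsumg : ∀ g : Γ, Summable fun n : ℤ => ∫ t in Set.Ioc (0:ℝ) T, ‖F (g * γ₀ ^ n, t)‖ :=
    fun g => hsum.comp_injective ((mul_right_injective g).comp hinj)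
  -- integrability on ℝ
  have hIntR : ∀ g : Γ, Integrable fun t : ℝ => F (g, t) := by
    intro g
    have : IntegrableOn (fun t : ℝ => F (g, t)) (⋃ n : ℤ, S n) :=
      integrableOn_iUnion_of_summable_integral_norm
        (hIntOn g)
        ((hsumg g).congr fun n => (hnorm_eq g n).symm)
    rwa [hS_union, integrableOn_univ] at this
  -- HasSum decompositions
  have hHasSumVal : ∀ g : Γ,
      HasSum (fun n : ℤ => ∫ t in Set.Ioc (0:ℝ) T, F (g * γ₀ ^ n, t)) (∫ t : ℝ, F (g, t)) := by
    intro g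
    have h := hasSum_integral_iUnion (μ := volume) (s := S) (f := fun t => F (g, t))
      (fun n => measurableSet_Ioc) hS_disj (by rw [hS_union]; exact (hIntR g).integrableOn)
    rw [hS_union, setIntegral_univ] at h
    exact HasSum.congr_fun h fun n => (hval_eq g n).symm
  have hHasSumNorm : ∀ g : Γ,
      HasSum (fun n : ℤ => ∫ t in Set.Ioc (0:ℝ) T, ‖F (g * γ₀ ^ n, t)‖)
        (∫ t : ℝ, ‖F (g, t)‖) := by
    intro g
    have h := hasSum_integral_iUnion (μ := volume) (s := S) (f := fun t => ‖F (g, t)‖)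
      (fun n => measurableSet_Ioc) hS_disj (by rw [hS_union]; exact (hIntR g).norm.integrableOn)
    rw [hS_union, setIntegral_univ] at h
    exact HasSum.congr_fun h fun n => (hnorm_eq g n).symm
  -- coset invariance
  have hcoset : ∀ g : Γ, ∀ γ ∈ H, ∫ t : ℝ, F (g * γ, t) = ∫ t : ℝ, F (g, t) := by
    intro g γ hγ
    obtain ⟨n, rfl⟩ := Subgroup.mem_zpowers_iff.mp hγ
    calc ∫ t : ℝ, F (g * γ₀ ^ n, t) = ∫ t : ℝ, F (g, t + (n : ℝ) * T) := by
          simp only [hequiv]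
      _ = ∫ t : ℝ, F (g, t) := integral_add_right_eq_self (fun t => F (g, t)) ((n : ℝ) * T)
  -- the unfolding equivalence
  have hmk : ∀ (c : Γ ⧸ H) (n : ℤ),
      (QuotientGroup.mk (Quotient.out c * γ₀ ^ n) : Γ ⧸ H) = c := by
    intro c n
    rw [QuotientGroup.mk_mul_of_mem _ (Subgroup.mem_zpowers_iff.mpr ⟨n, rfl⟩)]
    exact QuotientGroup.out_eq' c
  obtain ⟨e, he⟩ : ∃ e : (Γ ⧸ H) × ℤ ≃ Γ,
      ∀ p : (Γ ⧸ H) × ℤ, e p = Quotient.out p.1 * γ₀ ^ p.2 := by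
    refine ⟨Equiv.ofBijective (fun p => Quotient.out p.1 * γ₀ ^ p.2) ⟨?_, ?_⟩, fun p => rfl⟩
    · rintro ⟨c, n⟩ ⟨c', m⟩ h
      have hc : c = c' := by
        have := congrArg (QuotientGroup.mk (s := H)) h
        rwa [hmk, hmk] at this
      subst hc
      have : γ₀ ^ n = γ₀ ^ m := mul_left_cancel h
      exact Prod.ext rfl (hinj this)
    · intro g
      have hmem : (Quotient.out (QuotientGroup.mk (s := H) g))⁻¹ * g ∈ H := by
        rw [← QuotientGroup.eq]
        exact QuotientGroup.out_eq' _
      obtain ⟨n, hn⟩ := Subgroup.mem_zpowers_iff.mp hmem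
      exact ⟨(QuotientGroup.mk g, n), by simp [hn]⟩
  -- summability over the product
  set A : Γ → ℝ := fun g => ∫ t in Set.Ioc (0:ℝ) T, ‖F (g, t)‖ with hAdef
  have hAe : Summable fun p : (Γ ⧸ H) × ℤ => A (e p) := e.summable_iff.mpr hsum
  have hA_nonneg : ∀ p : (Γ ⧸ H) × ℤ, 0 ≤ A (e p) :=
    fun p => integral_nonneg fun t => norm_nonneg _
  have houter : Summable fun c : Γ ⧸ H => ∑' n : ℤ, A (e (c, n)) :=
    ((summable_prod_of_nonneg hA_nonneg).mp hAe).2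
  have htsumA : ∀ c : Γ ⧸ H, (∑' n : ℤ, A (e (c, n))) = ∫ t : ℝ, ‖F (Quotient.out c, t)‖ := by
    intro c
    simp only [hAdef, he]
    exact (hHasSumNorm (Quotient.out c)).tsum_eq
  -- absolute convergence of the coset sum
  have hcosetSummable :
      Summable fun c : Γ ⧸ H => ‖∫ t : ℝ, F (Quotient.out c, t)‖ := by
    refine Summable.of_nonneg_of_le (fun c => norm_nonneg _) (fun c => ?_) houter
    rw [htsumA c]
    exact norm_integral_le_integral_norm _
  refine ⟨hIntR, hcoset, hcosetSummable, ?_⟩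
  -- main identity
  set I : Γ → ℂ := fun g => ∫ t in Set.Ioc (0:ℝ) T, F (g, t) with hIdef
  have hI_summable : Summable I :=
    Summable.of_norm_bounded hsum fun g => by
      simp only [hIdef, hAdef]; exact norm_integral_le_integral_norm _
  have hIe : Summable fun p : (Γ ⧸ H) × ℤ => I (e p) := e.summable_iff.mpr hI_summable
  calc ∑' g : Γ, I g = ∑' p : (Γ ⧸ H) × ℤ, I (e p) := (e.tsum_eq I).symm
    _ = ∑' (c : Γ ⧸ H) (n : ℤ), I (e (c, n)) :=
        Summable.tsum_prod' hIe fun c => by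
          simp only [hIdef, he]
          exact (hHasSumVal (Quotient.out c)).summable
    _ = ∑' c : Γ ⧸ H, ∫ t : ℝ, F (Quotient.out c, t) :=
        tsum_congr fun c => by
          simp only [hIdef, he]
          exact (hHasSumVal (Quotient.out c)).tsum_eq
end
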